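/- arXiv:2601.20456 — 4 statements merged into one kernel-verified Lean document; each statement's English description precedes it below -/
import Mathlib

section
/- Weak coercivity (Gårding inequality) of the drift–diffusion bilinear form: for every δ > ‖u‖_∞/(2 D̲) and every family of continuously differentiable functions ρ_i : [0, l_i] → ℝ (i = 1, …, N), one has ∑_{i=1}^{N} ∫_0^{l_i} ( D_i ρ_i'(x)² + u_i(x) ρ_i(x) ρ_i'(x) ) dx ≥ γ ‖ρ‖_{ℍ¹}² − λ ‖ρ‖_{𝕃²}², where γ = D̲ − ‖u‖_∞/(2δ) > 0 and λ = D̲ + (δ/2) ‖u‖_∞ > 0. -/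
open MeasureTheory Set

private lemma garding_key (Di Dl U d a b c : ℝ) (hDi : Dl ≤ Di) (hd : 0 < d)
    (hU : 0 ≤ U) (hc : |c| ≤ U) :
    (Dl - U / (2 * d)) * (a ^ 2 + b ^ 2) - (Dl + (d / 2) * U) * a ^ 2 ≤
      Di * b ^ 2 + c * a * b := by
  set q : ℝ := U / (2 * d) with hqdef
  have hq : q * (2 * d) = U := by rw [hqdef]; exact div_mul_cancel₀ U (by positivity)
  have hq0 : 0 ≤ q := div_nonneg hU (by linarith)
  have h1 : -(U * (|a| * |b|)) ≤ c * a * b := by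
    have habs : |c * a * b| = |c| * (|a| * |b|) := by
      rw [abs_mul, abs_mul, mul_assoc]
    have h2 : |c * a * b| ≤ U * (|a| * |b|) :=
      habs ▸ mul_le_mul_of_nonneg_right hc (by positivity)
    linarith [neg_abs_le (c * a * b)]
  have h2 : 2 * d * (|a| * |b|) ≤ d ^ 2 * a ^ 2 + b ^ 2 := by
    nlinarith [sq_nonneg (d * |a| - |b|), sq_abs a, sq_abs b]
  have h3 : U * (|a| * |b|) ≤ (d / 2) * U * a ^ 2 + q * b ^ 2 := by
    nlinarith [mul_le_mul_of_nonneg_left h2 hq0]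
  nlinarith [mul_nonneg hq0 (sq_nonneg a), mul_nonneg (sub_nonneg.mpr hDi) (sq_nonneg b)]

/-- **Weak coercivity (Gårding inequality) of the drift–diffusion bilinear form.**
For every δ > ‖u‖_∞/(2 D̲) and every family of C¹ functions ρ_i on [0, l_i],
`∑ᵢ ∫₀^{lᵢ} (Dᵢ ρᵢ'² + uᵢ ρᵢ ρᵢ') dx ≥ γ ‖ρ‖²_{ℍ¹} − λ ‖ρ‖²_{𝕃²}`,
where `γ = D̲ − ‖u‖_∞/(2δ) > 0` and `λ = D̲ + (δ/2) ‖u‖_∞ > 0`. -/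
theorem garding_inequality_bilinear_form
    (N : ℕ) (hN : 0 < N) (l D : Fin N → ℝ)
    (hl : ∀ i, 0 < l i) (hD : ∀ i, 0 < D i)
    (ρ : Fin N → ℝ → ℝ) (hρ : ∀ i, ContDiff ℝ 1 (ρ i))
    (u : Fin N → ℝ → ℝ)
    (hu_meas : ∀ i, Measurable (u i))
    (hu_bdd : ∀ i, BddAbove ((fun x => |u i x|) '' Icc 0 (l i)))
    (Dlow unorm : ℝ)
    (hDlow : Dlow =
      Finset.univ.inf' (Finset.univ_nonempty_iff.mpr (Fin.pos_iff_nonempty.mp hN)) D)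
    (hunorm : unorm = ∑ i, sSup ((fun x => |u i x|) '' Icc 0 (l i)))
    (δ : ℝ) (hδ : unorm / (2 * Dlow) < δ)
    (γ lam : ℝ)
    (hγ : γ = Dlow - unorm / (2 * δ))
    (hlam : lam = Dlow + (δ / 2) * unorm) :
    0 < γ ∧ 0 < lam ∧
      ∑ i, ∫ x in (0:ℝ)..(l i),
          (D i * (deriv (ρ i) x) ^ 2 + u i x * ρ i x * deriv (ρ i) x) ≥
        γ * (∑ i, ∫ x in (0:ℝ)..(l i), ((ρ i x) ^ 2 + (deriv (ρ i) x) ^ 2)) -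
          lam * (∑ i, ∫ x in (0:ℝ)..(l i), (ρ i x) ^ 2) := by
  set M : Fin N → ℝ := fun i => sSup ((fun x => |u i x|) '' Icc 0 (l i)) with hM
  have hMu : ∀ i, ∀ x ∈ Icc (0:ℝ) (l i), |u i x| ≤ M i := fun i x hx =>
    le_csSup (hu_bdd i) ⟨x, hx, rfl⟩
  have hMnn : ∀ i, 0 ≤ M i := fun i =>
    (abs_nonneg (u i 0)).trans (hMu i 0 ⟨le_refl 0, (hl i).le⟩)
  have hMle : ∀ i, M i ≤ unorm := by
    intro i
    rw [hunorm]
    exact Finset.single_le_sum (fun j _ => hMnn j) (Finset.mem_univ i)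
  have hun : 0 ≤ unorm := (hMnn ⟨0, hN⟩).trans (hMle ⟨0, hN⟩)
  have hDle : ∀ i, Dlow ≤ D i := fun i => hDlow ▸ Finset.inf'_le D (Finset.mem_univ i)
  have hDlp : 0 < Dlow := (hDlow ▸ (Finset.lt_inf'_iff _).mpr fun i _ => hD i)
  have hδ0 : 0 < δ := lt_of_le_of_lt (div_nonneg hun (by linarith)) hδ
  have hγ0 : 0 < γ := by
    have h1 : unorm < δ * (2 * Dlow) := (div_lt_iff₀ (by linarith)).mp hδ
    have h2 : unorm / (2 * δ) < Dlow := (div_lt_iff₀ (by linarith)).mpr (by linarith)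
    rw [hγ]; linarith
  have hlam0 : 0 < lam := by
    rw [hlam]
    nlinarith [mul_nonneg hδ0.le hun]
  refine ⟨hγ0, hlam0, ?_⟩
  -- integrability facts
  have hρc : ∀ i, Continuous (ρ i) := fun i => (hρ i).continuous
  have hρ'c : ∀ i, Continuous (deriv (ρ i)) := fun i => (hρ i).continuous_deriv le_rfl
  have hint1 : ∀ i, IntervalIntegrable (fun x => (ρ i x) ^ 2 + (deriv (ρ i) x) ^ 2)
      volume 0 (l i) := fun i =>
    (((hρc i).pow 2).add ((hρ'c i).pow 2)).intervalIntegrable _ _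
  have hint2 : ∀ i, IntervalIntegrable (fun x => (ρ i x) ^ 2) volume 0 (l i) := fun i =>
    ((hρc i).pow 2).intervalIntegrable _ _
  have hintf : ∀ i, IntervalIntegrable
      (fun x => γ * ((ρ i x) ^ 2 + (deriv (ρ i) x) ^ 2) - lam * (ρ i x) ^ 2)
      volume 0 (l i) := fun i =>
    (((hint1 i).const_mul γ).sub ((hint2 i).const_mul lam))
  have hintg : ∀ i, IntervalIntegrable
      (fun x => D i * (deriv (ρ i) x) ^ 2 + u i x * ρ i x * deriv (ρ i) x)
      volume 0 (l i) := by
    intro i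
    have hcont : IntervalIntegrable (fun x => D i * (deriv (ρ i) x) ^ 2) volume 0 (l i) :=
      (continuous_const.mul ((hρ'c i).pow 2)).intervalIntegrable _ _
    refine hcont.add ?_
    rw [intervalIntegrable_iff, uIoc_of_le (hl i).le]
    obtain ⟨C, hC⟩ := isCompact_Icc.exists_bound_of_continuousOn
      (f := fun x => ρ i x * deriv (ρ i) x) (((hρc i).mul (hρ'c i)).continuousOn)
      (s := Icc (0:ℝ) (l i))
    have hC0 : 0 ≤ C := (norm_nonneg _).trans (hC 0 ⟨le_refl 0, (hl i).le⟩)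
    apply Measure.integrableOn_of_bounded (M := M i * C) measure_Ioc_lt_top.ne
      (((hu_meas i).mul (hρc i).measurable).mul
        (hρ'c i).measurable).aestronglyMeasurable
    refine (ae_restrict_iff' measurableSet_Ioc).mpr (ae_of_all _ fun x hx => ?_)
    have hx' : x ∈ Icc (0:ℝ) (l i) := Ioc_subset_Icc_self hx
    have : ‖u i x * ρ i x * deriv (ρ i) x‖ = |u i x| * ‖ρ i x * deriv (ρ i) x‖ := by
      rw [Real.norm_eq_abs, Real.norm_eq_abs, mul_assoc, abs_mul]
    rw [Pi.mul_apply, Pi.mul_apply, this]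
    exact mul_le_mul (hMu i x hx') (hC x hx') (norm_nonneg _) (hMnn i)
  -- pointwise inequality integrated on each edge
  have hkey : ∀ i,
      (∫ x in (0:ℝ)..(l i),
        (γ * ((ρ i x) ^ 2 + (deriv (ρ i) x) ^ 2) - lam * (ρ i x) ^ 2)) ≤
      ∫ x in (0:ℝ)..(l i),
        (D i * (deriv (ρ i) x) ^ 2 + u i x * ρ i x * deriv (ρ i) x) := by
    intro i
    refine intervalIntegral.integral_mono_on (hl i).le (hintf i) (hintg i) fun x hx => ?_
    have hcx : |u i x| ≤ unorm := (hMu i x hx).trans (hMle i)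
    have := garding_key (D i) Dlow unorm δ (ρ i x) (deriv (ρ i) x) (u i x)
      (hDle i) hδ0 hun hcx
    rw [hγ, hlam]
    linarith
  have hsplit : ∀ i,
      (∫ x in (0:ℝ)..(l i),
        (γ * ((ρ i x) ^ 2 + (deriv (ρ i) x) ^ 2) - lam * (ρ i x) ^ 2)) =
      γ * (∫ x in (0:ℝ)..(l i), ((ρ i x) ^ 2 + (deriv (ρ i) x) ^ 2)) -
        lam * (∫ x in (0:ℝ)..(l i), (ρ i x) ^ 2) := by
    intro i
    rw [intervalIntegral.integral_sub ((hint1 i).const_mul γ) ((hint2 i).const_mul lam),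
      intervalIntegral.integral_const_mul, intervalIntegral.integral_const_mul]
  calc γ * (∑ i, ∫ x in (0:ℝ)..(l i), ((ρ i x) ^ 2 + (deriv (ρ i) x) ^ 2)) -
          lam * (∑ i, ∫ x in (0:ℝ)..(l i), (ρ i x) ^ 2)
      = ∑ i, (γ * (∫ x in (0:ℝ)..(l i), ((ρ i x) ^ 2 + (deriv (ρ i) x) ^ 2)) -
          lam * (∫ x in (0:ℝ)..(l i), (ρ i x) ^ 2)) := by
        rw [Finset.mul_sum, Finset.mul_sum, Finset.sum_sub_distrib]
    _ = ∑ i, ∫ x in (0:ℝ)..(l i),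
          (γ * ((ρ i x) ^ 2 + (deriv (ρ i) x) ^ 2) - lam * (ρ i x) ^ 2) := by
        exact Finset.sum_congr rfl fun i _ => (hsplit i).symm
    _ ≤ ∑ i, ∫ x in (0:ℝ)..(l i),
          (D i * (deriv (ρ i) x) ^ 2 + u i x * ρ i x * deriv (ρ i) x) :=
        Finset.sum_le_sum fun i _ => hkey i
end

section
/- Uniqueness of classical solutions of the Fokker–Planck system on a star graph: if ρ¹ = (ρ¹_i)_{i=1}^N and ρ² = (ρ²_i)_{i=1}^N are two classical solutions of the system with the same source terms f_i, the same drifts u_i and the same initial data ρ⁰_i, then ρ¹_i(x,t) = ρ²_i(x,t) for all i = 1, …, N and all (x,t) ∈ [0,l_i] × [0,T]. -/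
open MeasureTheory Set

/-- A classical solution of the Fokker–Planck system on a metric star graph with `N` edges:
each `ρ i : [0, l i] × [0, T] → ℝ` is continuous together with `∂_t ρ i`, `∂_x ρ i` and
`∂_x² ρ i`, satisfies the PDE `∂_t ρ_i = D_i ∂_x² ρ_i + ∂_x (u_i ρ_i) + f_i` on each edge,
the initial condition, the Kirchhoff condition and vertex continuity at the central
vertex, and the Dirichlet condition at the outer endpoints. -/
structure ClassicalSolution (N : ℕ) (T : ℝ) (l D : Fin N → ℝ)
    (u f : Fin N → ℝ → ℝ → ℝ) (ρ0 : Fin N → ℝ → ℝ)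
    (ρ : Fin N → ℝ → ℝ → ℝ) : Prop where
  cont : ∀ i, ContinuousOn (fun p : ℝ × ℝ => ρ i p.1 p.2) (Icc 0 (l i) ×ˢ Icc 0 T)
  diff_t : ∀ i, ∀ x ∈ Icc 0 (l i), ∀ t ∈ Icc 0 T, DifferentiableAt ℝ (ρ i x) t
  diff_x : ∀ i, ∀ x ∈ Icc 0 (l i), ∀ t ∈ Icc 0 T,
    DifferentiableAt ℝ (fun y => ρ i y t) x
  diff_xx : ∀ i, ∀ x ∈ Icc 0 (l i), ∀ t ∈ Icc 0 T,
    DifferentiableAt ℝ (fun y => deriv (fun z => ρ i z t) y) x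
  cont_t : ∀ i, ContinuousOn (fun p : ℝ × ℝ => deriv (ρ i p.1) p.2)
    (Icc 0 (l i) ×ˢ Icc 0 T)
  cont_x : ∀ i, ContinuousOn (fun p : ℝ × ℝ => deriv (fun y => ρ i y p.2) p.1)
    (Icc 0 (l i) ×ˢ Icc 0 T)
  cont_xx : ∀ i, ContinuousOn
    (fun p : ℝ × ℝ => deriv (fun y => deriv (fun z => ρ i z p.2) y) p.1)
    (Icc 0 (l i) ×ˢ Icc 0 T)
  pde : ∀ i, ∀ x ∈ Ioo 0 (l i), ∀ t ∈ Ioo 0 T,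
    deriv (ρ i x) t =
      D i * deriv (fun y => deriv (fun z => ρ i z t) y) x +
        deriv (fun y => u i y t * ρ i y t) x + f i x t
  init : ∀ i, ∀ x ∈ Icc 0 (l i), ρ i x 0 = ρ0 i x
  kirchhoff : ∀ t ∈ Ioo 0 T,
    ∑ i, (D i * deriv (fun y => ρ i y t) 0 + u i 0 t * ρ i 0 t) = 0
  vertex : ∀ i j, i ≠ j → ∀ t ∈ Ioo 0 T, ρ i 0 t = ρ j 0 t
  dirichlet : ∀ i, ∀ t ∈ Ioo 0 T, ρ i (l i) t = 0


open intervalIntegral Filter Topology Metric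


open MeasureTheory Set intervalIntegral Filter Topology Metric

/-- Derivative of a product where one factor is merely continuous but the other vanishes. -/
lemma aux_hasDerivAt_mul_of_zero {u ρ : ℝ → ℝ} {x d : ℝ}
    (hu : ContinuousAt u x) (hρ : HasDerivAt ρ d x) (h0 : ρ x = 0) :
    HasDerivAt (fun y => u y * ρ y) (u x * d) x := by
  rw [hasDerivAt_iff_tendsto_slope] at hρ ⊢
  have h1 : Tendsto u (𝓝[≠] x) (𝓝 (u x)) := hu.tendsto.mono_left nhdsWithin_le_nhds
  refine (h1.mul hρ).congr' ?_
  filter_upwards [self_mem_nhdsWithin] with y hy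
  simp only [slope_def_field, h0, mul_zero, sub_zero]
  field_simp

lemma aux_not_differentiable_mul {u ρ : ℝ → ℝ} {x : ℝ}
    (hρ : DifferentiableAt ℝ ρ x) (h0 : ρ x ≠ 0)
    (hu : ¬ DifferentiableAt ℝ u x) :
    ¬ DifferentiableAt ℝ (fun y => u y * ρ y) x := by
  intro h
  apply hu
  have hne : ∀ᶠ y in 𝓝 x, ρ y ≠ 0 := hρ.continuousAt.eventually_ne h0
  have heq : u =ᶠ[𝓝 x] fun y => u y * ρ y / ρ y := by
    filter_upwards [hne] with y hy
    field_simp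
  exact (h.div hρ h0).congr_of_eventuallyEq heq

lemma aux_eq_zero_of_integral_zero {f : ℝ → ℝ} {b : ℝ} (hb : 0 < b)
    (hc : ContinuousOn f (Icc 0 b)) (hnn : ∀ x ∈ Icc 0 b, 0 ≤ f x)
    (hi : (∫ x in (0:ℝ)..b, f x) = 0) : ∀ x ∈ Icc 0 b, f x = 0 := by
  intro x hx
  by_contra hne
  have hfx : 0 < f x := (hnn x hx).lt_of_ne (Ne.symm hne)
  have hcx : ContinuousWithinAt f (Icc 0 b) x := hc x hx
  have hev : ∀ᶠ y in 𝓝[Icc 0 b] x, f x / 2 < f y :=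
    hcx.eventually (eventually_gt_nhds (by linarith))
  obtain ⟨δ, hδ, hball0⟩ := Metric.mem_nhdsWithin_iff.mp hev
  have hball : ∀ y, dist y x < δ → y ∈ Icc 0 b → f x / 2 < f y := fun y h1 h2 =>
    hball0 ⟨Metric.mem_ball.mpr h1, h2⟩
  set p := max 0 (x - δ / 2) with hp
  set q := min b (x + δ / 2) with hq
  have hpq : p < q := by
    rw [hp, hq]
    rcases hx with ⟨hx0, hxb⟩
    apply max_lt <;> apply lt_min <;> linarith
  have hp0 : 0 ≤ p := le_max_left _ _
  have hqb : q ≤ b := min_le_left _ _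
  have hpos : ∀ y ∈ Ioo p q, 0 < f y := by
    intro y hy
    have h1 : x - δ / 2 ≤ p := le_max_right _ _
    have h2 : q ≤ x + δ / 2 := min_le_right _ _
    have hyIcc : y ∈ Icc 0 b := ⟨le_trans hp0 hy.1.le, le_trans hy.2.le hqb⟩
    have : dist y x < δ := by
      rw [Real.dist_eq, abs_lt]
      constructor <;> [linarith [hy.1, h1]; linarith [hy.2, h2]]
    have := hball y this hyIcc
    linarith
  have hint : IntervalIntegrable f volume p q := by
    apply ContinuousOn.intervalIntegrable
    rw [uIcc_of_le hpq.le]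
    exact hc.mono (Icc_subset_Icc hp0 hqb)
  have h1 : 0 < ∫ y in p..q, f y := intervalIntegral_pos_of_pos_on hint hpos hpq
  have h2 : (∫ y in p..q, f y) ≤ ∫ y in (0:ℝ)..b, f y := by
    apply integral_mono_interval hp0 hpq.le hqb
    · rw [Filter.EventuallyLE, ae_restrict_iff' measurableSet_Ioc]
      exact ae_of_all _ fun y hy => hnn y ⟨hy.1.le, hy.2⟩
    · apply ContinuousOn.intervalIntegrable
      rwa [uIcc_of_le hb.le]
  rw [hi] at h2
  linarith

lemma aux_countable_isolated {S : Set ℝ}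
    (h : ∀ x ∈ S, ∃ ε > 0, ∀ y ∈ S, |y - x| < ε → y = x) : S.Countable := by
  have hch : ∀ x : ℝ, ∃ pq : ℚ × ℚ, x ∈ S →
      ((pq.1 : ℝ) < x ∧ x < pq.2 ∧ ∀ y ∈ S, (pq.1 : ℝ) < y → y < (pq.2 : ℝ) → y = x) := by
    intro x
    by_cases hx : x ∈ S
    · obtain ⟨ε, hε, hiso⟩ := h x hx
      obtain ⟨p, hp1, hp2⟩ := exists_rat_btwn (show x - ε < x by linarith)
      obtain ⟨q, hq1, hq2⟩ := exists_rat_btwn (show x < x + ε by linarith)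
      refine ⟨(p, q), fun _ => ⟨hp2, hq1, fun y hy hyp hyq => ?_⟩⟩
      apply hiso y hy
      rw [abs_lt]
      constructor <;> simp only at hyp hyq <;> linarith
    · exact ⟨(0, 0), fun hx' => absurd hx' hx⟩
  choose F hF using hch
  have : Set.MapsTo F S (Set.univ : Set (ℚ × ℚ)) := fun x _ => trivial
  apply this.countable_of_injOn ?_ (Set.countable_univ)
  intro x hx x' hx' hEq
  obtain ⟨h1, h2, h3⟩ := hF x hx
  obtain ⟨h1', h2', _⟩ := hF x' hx'
  exact (h3 x' hx' (by rw [hEq]; exact h1') (by rw [hEq]; exact h2')).symm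
lemma aux_slice_x {F : ℝ × ℝ → ℝ} {lx T : ℝ}
    (h : ContinuousOn F (Icc 0 lx ×ˢ Icc 0 T)) {t : ℝ} (ht : t ∈ Icc 0 T) :
    ContinuousOn (fun x => F (x, t)) (Icc 0 lx) :=
  h.comp (Continuous.continuousOn (continuous_id.prodMk continuous_const))
    (fun x hx => Set.mk_mem_prod hx ht)

lemma aux_slice_t {F : ℝ × ℝ → ℝ} {lx T : ℝ}
    (h : ContinuousOn F (Icc 0 lx ×ˢ Icc 0 T)) {x : ℝ} (hx : x ∈ Icc 0 lx) :
    ContinuousOn (fun t => F (x, t)) (Icc 0 T) :=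
  h.comp (Continuous.continuousOn (continuous_const.prodMk continuous_id))
    (fun t ht => Set.mk_mem_prod hx ht)

lemma aux_slice_continuousAt {F : ℝ × ℝ → ℝ} {lx T x t : ℝ}
    (h : ContinuousOn F (Icc 0 lx ×ˢ Icc 0 T)) (hx : x ∈ Ioo 0 lx) (ht : t ∈ Ioo 0 T) :
    ContinuousAt (fun y => F (y, t)) x := by
  have h1 : ContinuousAt F (x, t) :=
    h.continuousAt (prod_mem_nhds (Icc_mem_nhds hx.1 hx.2) (Icc_mem_nhds ht.1 ht.2))
  have h2 : ContinuousAt (fun y : ℝ => (y, t)) x :=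
    (continuous_id.prodMk continuous_const).continuousAt
  exact ContinuousAt.comp (g := F) (f := fun y : ℝ => (y, t)) h1 h2

/-- The key pointwise estimate on the difference of (possibly junk) derivatives of the
drift terms, away from the countable exceptional set. -/
lemma aux_g_pointwise {uf r1 r2 : ℝ → ℝ} {x U M : ℝ}
    (huc : ContinuousAt uf x)
    (hr1 : DifferentiableAt ℝ r1 x) (hr2 : DifferentiableAt ℝ r2 x)
    (hU : |uf x| ≤ U) (hM : DifferentiableAt ℝ uf x → |deriv uf x| ≤ M)
    (hM0 : 0 ≤ M) (hU0 : 0 ≤ U)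
    (hB1 : r1 x = 0 → deriv r1 x = 0) (hB2 : r2 x = 0 → deriv r2 x = 0) :
    |deriv (fun y => uf y * r1 y) x - deriv (fun y => uf y * r2 y) x| ≤
      M * |r1 x - r2 x| + U * |deriv r1 x - deriv r2 x| := by
  have hrhs0 : ∀ A B : ℝ, 0 ≤ M * |A| + U * |B| := fun A B =>
    add_nonneg (mul_nonneg hM0 (abs_nonneg _)) (mul_nonneg hU0 (abs_nonneg _))
  by_cases hud : DifferentiableAt ℝ uf x
  · rw [deriv_fun_mul hud hr1, deriv_fun_mul hud hr2]
    have heq : deriv uf x * r1 x + uf x * deriv r1 x -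
        (deriv uf x * r2 x + uf x * deriv r2 x) =
        deriv uf x * (r1 x - r2 x) + uf x * (deriv r1 x - deriv r2 x) := by ring
    rw [heq]
    calc |deriv uf x * (r1 x - r2 x) + uf x * (deriv r1 x - deriv r2 x)|
        ≤ |deriv uf x * (r1 x - r2 x)| + |uf x * (deriv r1 x - deriv r2 x)| := abs_add_le _ _
      _ ≤ M * |r1 x - r2 x| + U * |deriv r1 x - deriv r2 x| := by
          rw [abs_mul, abs_mul]
          exact add_le_add (mul_le_mul_of_nonneg_right (hM hud) (abs_nonneg _))
            (mul_le_mul_of_nonneg_right hU (abs_nonneg _))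
  · by_cases h10 : r1 x = 0
    · have hd1 : deriv (fun y => uf y * r1 y) x = uf x * deriv r1 x :=
        (aux_hasDerivAt_mul_of_zero huc hr1.hasDerivAt h10).deriv
      by_cases h20 : r2 x = 0
      · have hd2 : deriv (fun y => uf y * r2 y) x = uf x * deriv r2 x :=
          (aux_hasDerivAt_mul_of_zero huc hr2.hasDerivAt h20).deriv
        rw [hd1, hd2, ← mul_sub, abs_mul]
        refine le_add_of_nonneg_of_le (mul_nonneg hM0 (abs_nonneg _)) ?_
        exact mul_le_mul_of_nonneg_right hU (abs_nonneg _)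
      · have hd2 : deriv (fun y => uf y * r2 y) x = 0 :=
          deriv_zero_of_not_differentiableAt (aux_not_differentiable_mul hr2 h20 hud)
        rw [hd1, hd2, hB1 h10]
        simpa using hrhs0 _ _
    · have hd1 : deriv (fun y => uf y * r1 y) x = 0 :=
        deriv_zero_of_not_differentiableAt (aux_not_differentiable_mul hr1 h10 hud)
      by_cases h20 : r2 x = 0
      · have hd2 : deriv (fun y => uf y * r2 y) x = uf x * deriv r2 x :=
          (aux_hasDerivAt_mul_of_zero huc hr2.hasDerivAt h20).deriv
        rw [hd1, hd2, hB2 h20]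
        simpa using hrhs0 _ _
      · have hd2 : deriv (fun y => uf y * r2 y) x = 0 :=
          deriv_zero_of_not_differentiableAt (aux_not_differentiable_mul hr2 h20 hud)
        rw [hd1, hd2]
        simpa using hrhs0 _ _

lemma aux_young {Uv Dv s r : ℝ} (hDv : 0 < Dv) :
    Uv * (s * r) ≤ Uv ^ 2 / Dv * s ^ 2 + Dv / 4 * r ^ 2 := by
  have key : Uv * (s * r) * Dv ≤ Uv ^ 2 * s ^ 2 + Dv ^ 2 / 4 * r ^ 2 := by
    nlinarith [sq_nonneg (Uv * s - Dv / 2 * r)]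
  calc Uv * (s * r) = Uv * (s * r) * Dv / Dv := by field_simp
    _ ≤ (Uv ^ 2 * s ^ 2 + Dv ^ 2 / 4 * r ^ 2) / Dv := by
        exact (div_le_div_iff_of_pos_right hDv).mpr key
    _ = Uv ^ 2 / Dv * s ^ 2 + Dv / 4 * r ^ 2 := by field_simp

set_option maxHeartbeats 1000000 in
/-- **Uniqueness of classical solutions of the Fokker–Planck system on a star graph.**
Two classical solutions with the same sources `f`, drifts `u` and initial data `ρ0`
coincide on `[0, l i] × [0, T]` for every edge `i`. -/
theorem uniqueness_classical_solutions
    (N : ℕ) (hN : 0 < N) (T : ℝ) (hT : 0 < T)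
    (l D : Fin N → ℝ) (hl : ∀ i, 0 < l i) (hD : ∀ i, 0 < D i)
    (u f : Fin N → ℝ → ℝ → ℝ)
    (hu_cont : ∀ i, ContinuousOn (fun p : ℝ × ℝ => u i p.1 p.2)
      (Icc 0 (l i) ×ˢ Icc 0 T))
    (hu_bdd : ∀ i, ∃ C, ∀ x ∈ Icc 0 (l i), ∀ t ∈ Icc 0 T, |u i x t| ≤ C)
    (hux_cont : ∀ i, ContinuousOn (fun p : ℝ × ℝ => deriv (fun y => u i y p.2) p.1)
      (Icc 0 (l i) ×ˢ Icc 0 T))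
    (hf_cont : ∀ i, ContinuousOn (fun p : ℝ × ℝ => f i p.1 p.2)
      (Icc 0 (l i) ×ˢ Icc 0 T))
    (ρ0 : Fin N → ℝ → ℝ) (ρ1 ρ2 : Fin N → ℝ → ℝ → ℝ)
    (h1 : ClassicalSolution N T l D u f ρ0 ρ1)
    (h2 : ClassicalSolution N T l D u f ρ0 ρ2) :
    ∀ i, ∀ x ∈ Icc 0 (l i), ∀ t ∈ Icc 0 T, ρ1 i x t = ρ2 i x t := by
  classical
  choose U0 hU0 using hu_bdd
  set U : Fin N → ℝ := fun i => max (U0 i) 0 with hUdef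
  have hUnn : ∀ i, 0 ≤ U i := fun i => le_max_right _ _
  have hU : ∀ i, ∀ x ∈ Icc 0 (l i), ∀ t ∈ Icc 0 T, |u i x t| ≤ U i :=
    fun i x hx t ht => le_trans (hU0 i x hx t ht) (le_max_left _ _)
  have hMex : ∀ i : Fin N, ∃ Mi, 0 ≤ Mi ∧ ∀ x ∈ Icc 0 (l i), ∀ t ∈ Icc 0 T,
      |deriv (fun y => u i y t) x| ≤ Mi := by
    intro i
    obtain ⟨Mi, hMi⟩ :=
      (isCompact_Icc.prod isCompact_Icc).exists_bound_of_continuousOn (hux_cont i)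
    refine ⟨max Mi 0, le_max_right _ _, fun x hx t ht => le_trans ?_ (le_max_left _ _)⟩
    simpa only [Real.norm_eq_abs] using hMi (x, t) (Set.mk_mem_prod hx ht)
  choose M hMnn hM using hMex
  have hBex : ∀ i : Fin N, ∃ Bi, ∀ x ∈ Icc 0 (l i), ∀ t ∈ Icc 0 T,
      |2 * (ρ1 i x t - ρ2 i x t) * (deriv (ρ1 i x) t - deriv (ρ2 i x) t)| ≤ Bi := by
    intro i
    have hcont : ContinuousOn
        (fun p : ℝ × ℝ => 2 * (ρ1 i p.1 p.2 - ρ2 i p.1 p.2) *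
          (deriv (ρ1 i p.1) p.2 - deriv (ρ2 i p.1) p.2)) (Icc 0 (l i) ×ˢ Icc 0 T) :=
      (continuousOn_const.mul ((h1.cont i).sub (h2.cont i))).mul
        ((h1.cont_t i).sub (h2.cont_t i))
    obtain ⟨Bi, hBi⟩ := (isCompact_Icc.prod isCompact_Icc).exists_bound_of_continuousOn hcont
    exact ⟨Bi, fun x hx t ht => by
      simpa only [Real.norm_eq_abs] using hBi (x, t) (Set.mk_mem_prod hx ht)⟩
  choose B hB using hBex
  have hB2ex : ∀ i : Fin N, ∃ Bi, ∀ x ∈ Icc 0 (l i), ∀ t ∈ Icc 0 T,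
      |(ρ1 i x t - ρ2 i x t) ^ 2| ≤ Bi := by
    intro i
    have hcont : ContinuousOn (fun p : ℝ × ℝ => (ρ1 i p.1 p.2 - ρ2 i p.1 p.2) ^ 2)
        (Icc 0 (l i) ×ˢ Icc 0 T) := ((h1.cont i).sub (h2.cont i)).pow 2
    obtain ⟨Bi, hBi⟩ := (isCompact_Icc.prod isCompact_Icc).exists_bound_of_continuousOn hcont
    exact ⟨Bi, fun x hx t ht => by
      simpa only [Real.norm_eq_abs] using hBi (x, t) (Set.mk_mem_prod hx ht)⟩
  choose B2 hB2 using hB2ex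
  set j : Fin N := ⟨0, hN⟩ with hjdef
  set E : ℝ → ℝ := fun t => ∑ i, ∫ x in (0:ℝ)..(l i), (ρ1 i x t - ρ2 i x t) ^ 2 with hEdef
  set V : ℝ → ℝ := fun t => ∑ i, ∫ x in (0:ℝ)..(l i),
    2 * (ρ1 i x t - ρ2 i x t) * (deriv (ρ1 i x) t - deriv (ρ2 i x) t) with hVdef
  set Us : ℝ := ∑ i, U i with hUsdef
  have hUsnn : 0 ≤ Us := Finset.sum_nonneg fun i _ => hUnn i
  set a : ℝ := (2 * Us + 1) / D j with hadef
  have ha : 0 < a := div_pos (by linarith) (hD j)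
  set K : ℝ := (∑ i, 2 * (M i + (U i) ^ 2 / (D i))) + 2 * Us * a with hKdef
  have hKnn : 0 ≤ K := by
    apply add_nonneg
    · apply Finset.sum_nonneg
      intro i _
      have h1 := hMnn i
      have h2 := sq_nonneg (U i)
      have h3 := (hD i).le
      positivity
    · positivity
  have hA_nonneg : ∀ (i : Fin N) (t : ℝ),
      0 ≤ ∫ x in (0:ℝ)..(l i), (ρ1 i x t - ρ2 i x t) ^ 2 :=
    fun i t => intervalIntegral.integral_nonneg (hl i).le (fun x _ => sq_nonneg _)
  have hAleE : ∀ (i : Fin N) (t : ℝ),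
      (∫ x in (0:ℝ)..(l i), (ρ1 i x t - ρ2 i x t) ^ 2) ≤ E t := by
    intro i t
    rw [hEdef]
    exact Finset.single_le_sum (fun i _ => hA_nonneg i t) (Finset.mem_univ i)
  have hEnn : ∀ t, 0 ≤ E t := fun t => Finset.sum_nonneg fun i _ => hA_nonneg i t
  have hE0 : E 0 = 0 := by
    rw [hEdef]
    apply Finset.sum_eq_zero
    intro i _
    have heq : Set.EqOn (fun x => (ρ1 i x 0 - ρ2 i x 0) ^ 2) (fun _ => (0:ℝ))
        (Set.uIcc 0 (l i)) := by
      intro x hx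
      rw [uIcc_of_le (hl i).le] at hx
      simp [h1.init i x hx, h2.init i x hx]
    rw [intervalIntegral.integral_congr heq, intervalIntegral.integral_zero]
  have hEcont : ContinuousOn E (Icc 0 T) := by
    rw [hEdef]
    apply continuousOn_finset_sum
    intro i _
    intro t₀ ht₀
    apply intervalIntegral.continuousWithinAt_of_dominated_interval
      (bound := fun _ => B2 i)
    · filter_upwards [self_mem_nhdsWithin] with τ hτ
      rw [uIoc_of_le (hl i).le]
      exact ((aux_slice_x (F := fun p : ℝ × ℝ => (ρ1 i p.1 p.2 - ρ2 i p.1 p.2) ^ 2)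
        (((h1.cont i).sub (h2.cont i)).pow 2) hτ).mono
          Ioc_subset_Icc_self).aestronglyMeasurable measurableSet_Ioc
    · filter_upwards [self_mem_nhdsWithin] with τ hτ
      apply ae_of_all
      intro x hx
      rw [uIoc_of_le (hl i).le] at hx
      rw [Real.norm_eq_abs]
      exact hB2 i x (Ioc_subset_Icc_self hx) τ hτ
    · exact intervalIntegrable_const
    · apply ae_of_all
      intro x hx
      rw [uIoc_of_le (hl i).le] at hx
      exact (aux_slice_t (F := fun p : ℝ × ℝ => (ρ1 i p.1 p.2 - ρ2 i p.1 p.2) ^ 2)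
        (((h1.cont i).sub (h2.cont i)).pow 2) (Ioc_subset_Icc_self hx)) t₀ ht₀
  have hEderiv : ∀ t ∈ Ioo 0 T, HasDerivAt E (V t) t := by
    intro t₀ ht₀
    rw [hEdef, hVdef]
    apply HasDerivAt.fun_sum
    intro i _
    set ε : ℝ := min t₀ (T - t₀) with hεdef
    have hε : 0 < ε := lt_min ht₀.1 (sub_pos.mpr ht₀.2)
    have hball : ∀ τ ∈ Metric.ball t₀ ε, τ ∈ Icc 0 T := by
      intro τ hτ
      rw [Metric.mem_ball, Real.dist_eq, abs_lt] at hτ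
      have h1 := min_le_left t₀ (T - t₀)
      have h2 := min_le_right t₀ (T - t₀)
      constructor <;> [linarith [hτ.1]; linarith [hτ.2]]
    have hIoo : ∀ᶠ τ in 𝓝 t₀, τ ∈ Icc 0 T := by
      filter_upwards [isOpen_Ioo.mem_nhds ht₀] with τ hτ
      exact Ioo_subset_Icc_self hτ
    refine (intervalIntegral.hasDerivAt_integral_of_dominated_loc_of_deriv_le
      (F := fun τ x => (ρ1 i x τ - ρ2 i x τ) ^ 2)
      (F' := fun τ x => 2 * (ρ1 i x τ - ρ2 i x τ) * (deriv (ρ1 i x) τ - deriv (ρ2 i x) τ))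
      (bound := fun _ => B i) (Metric.ball_mem_nhds t₀ hε) ?_ ?_ ?_ ?_ ?_ ?_).2
    · filter_upwards [hIoo] with τ hτ
      rw [uIoc_of_le (hl i).le]
      exact ((aux_slice_x (F := fun p : ℝ × ℝ => (ρ1 i p.1 p.2 - ρ2 i p.1 p.2) ^ 2)
        (((h1.cont i).sub (h2.cont i)).pow 2) hτ).mono
          Ioc_subset_Icc_self).aestronglyMeasurable measurableSet_Ioc
    · apply ContinuousOn.intervalIntegrable
      rw [uIcc_of_le (hl i).le]
      exact aux_slice_x (F := fun p : ℝ × ℝ => (ρ1 i p.1 p.2 - ρ2 i p.1 p.2) ^ 2)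
        (((h1.cont i).sub (h2.cont i)).pow 2) (Ioo_subset_Icc_self ht₀)
    · rw [uIoc_of_le (hl i).le]
      exact ((aux_slice_x (F := fun p : ℝ × ℝ => 2 * (ρ1 i p.1 p.2 - ρ2 i p.1 p.2) *
        (deriv (ρ1 i p.1) p.2 - deriv (ρ2 i p.1) p.2))
        ((continuousOn_const.mul ((h1.cont i).sub (h2.cont i))).mul
          ((h1.cont_t i).sub (h2.cont_t i))) (Ioo_subset_Icc_self ht₀)).mono
            Ioc_subset_Icc_self).aestronglyMeasurable measurableSet_Ioc
    · apply ae_of_all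
      intro x hx τ hτ
      rw [uIoc_of_le (hl i).le] at hx
      rw [Real.norm_eq_abs]
      exact hB i x (Ioc_subset_Icc_self hx) τ (hball τ hτ)
    · exact intervalIntegrable_const
    · apply ae_of_all
      intro x hx τ hτ
      rw [uIoc_of_le (hl i).le] at hx
      have hxI : x ∈ Icc 0 (l i) := Ioc_subset_Icc_self hx
      have hτI : τ ∈ Icc 0 T := hball τ hτ
      have hd : HasDerivAt (fun s => ρ1 i x s - ρ2 i x s)
          (deriv (ρ1 i x) τ - deriv (ρ2 i x) τ) τ :=
        ((h1.diff_t i x hxI τ hτI).hasDerivAt).sub ((h2.diff_t i x hxI τ hτI).hasDerivAt)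
      have : HasDerivAt (fun s => (ρ1 i x s - ρ2 i x s) ^ 2) (((2:ℕ):ℝ) * (ρ1 i x τ - ρ2 i x τ) ^ (2 - 1) *
          (deriv (ρ1 i x) τ - deriv (ρ2 i x) τ)) τ := hd.fun_pow 2
      refine this.congr_deriv ?_
      simp [pow_one]
  have hVK : ∀ t ∈ Ioo 0 T, V t ≤ K * E t := by
    intro t ht
    have htI : t ∈ Icc 0 T := Ioo_subset_Icc_self ht
    set w : Fin N → ℝ → ℝ := fun i x => ρ1 i x t - ρ2 i x t with hwdef
    set q : Fin N → ℝ → ℝ := fun i x =>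
      deriv (fun z => ρ1 i z t) x - deriv (fun z => ρ2 i z t) x with hqdef
    set q2 : Fin N → ℝ → ℝ := fun i x =>
      deriv (fun y => deriv (fun z => ρ1 i z t) y) x -
        deriv (fun y => deriv (fun z => ρ2 i z t) y) x with hq2def
    set wt : Fin N → ℝ → ℝ := fun i x => deriv (ρ1 i x) t - deriv (ρ2 i x) t with hwtdef
    set g : Fin N → ℝ → ℝ := fun i x => wt i x - D i * q2 i x with hgdef
    set c : ℝ := ρ1 j 0 t - ρ2 j 0 t with hcdef
    have hwD : ∀ i, ∀ x ∈ Icc 0 (l i), HasDerivAt (w i) (q i x) x := fun i x hx =>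
      ((h1.diff_x i x hx t htI).hasDerivAt).sub ((h2.diff_x i x hx t htI).hasDerivAt)
    have hqD : ∀ i, ∀ x ∈ Icc 0 (l i), HasDerivAt (q i) (q2 i x) x := fun i x hx =>
      ((h1.diff_xx i x hx t htI).hasDerivAt).sub ((h2.diff_xx i x hx t htI).hasDerivAt)
    have hcw : ∀ i, ContinuousOn (w i) (Icc 0 (l i)) := fun i =>
      aux_slice_x (F := fun p : ℝ × ℝ => ρ1 i p.1 p.2 - ρ2 i p.1 p.2)
        ((h1.cont i).sub (h2.cont i)) htI
    have hcq : ∀ i, ContinuousOn (q i) (Icc 0 (l i)) := fun i =>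
      aux_slice_x (F := fun p : ℝ × ℝ =>
        deriv (fun y => ρ1 i y p.2) p.1 - deriv (fun y => ρ2 i y p.2) p.1)
        ((h1.cont_x i).sub (h2.cont_x i)) htI
    have hcq2 : ∀ i, ContinuousOn (q2 i) (Icc 0 (l i)) := fun i =>
      aux_slice_x (F := fun p : ℝ × ℝ =>
        deriv (fun y => deriv (fun z => ρ1 i z p.2) y) p.1 -
          deriv (fun y => deriv (fun z => ρ2 i z p.2) y) p.1)
        ((h1.cont_xx i).sub (h2.cont_xx i)) htI
    have hcwt : ∀ i, ContinuousOn (wt i) (Icc 0 (l i)) := fun i =>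
      aux_slice_x (F := fun p : ℝ × ℝ => deriv (ρ1 i p.1) p.2 - deriv (ρ2 i p.1) p.2)
        ((h1.cont_t i).sub (h2.cont_t i)) htI
    have hcg : ∀ i, ContinuousOn (g i) (Icc 0 (l i)) := fun i =>
      (hcwt i).sub (continuousOn_const.mul (hcq2 i))
    have hInt : ∀ (i : Fin N) (F : ℝ → ℝ), ContinuousOn F (Icc 0 (l i)) →
        IntervalIntegrable F volume 0 (l i) := by
      intro i F hF
      apply ContinuousOn.intervalIntegrable
      rwa [uIcc_of_le (hl i).le]
    have hdirw : ∀ i, w i (l i) = 0 := by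
      intro i
      simp only [hwdef]
      rw [h1.dirichlet i t ht, h2.dirichlet i t ht, sub_zero]
    have hwc : ∀ i, w i 0 = c := by
      intro i
      by_cases hij : i = j
      · rw [hij]
      · simp only [hwdef, hcdef]
        rw [h1.vertex i j hij t ht, h2.vertex i j hij t ht]
    set Av : Fin N → ℝ := fun i => ∫ x in (0:ℝ)..(l i), (w i x) ^ 2 with hAvdef
    set Qv : Fin N → ℝ := fun i => ∫ x in (0:ℝ)..(l i), (q i x) ^ 2 with hQvdef
    have hAvnn : ∀ i, 0 ≤ Av i := fun i => by
      rw [hAvdef]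
      exact intervalIntegral.integral_nonneg (hl i).le fun x _ => sq_nonneg _
    have hQvnn : ∀ i, 0 ≤ Qv i := fun i => by
      rw [hQvdef]
      exact intervalIntegral.integral_nonneg (hl i).le fun x _ => sq_nonneg _
    have hAvE : ∀ i, Av i ≤ E t := by
      intro i
      have h := hAleE i t
      simp only [hAvdef, hwdef]
      exact h
    have hgeq : ∀ i, ∀ x ∈ Ioo 0 (l i), g i x =
        deriv (fun y => u i y t * ρ1 i y t) x - deriv (fun y => u i y t * ρ2 i y t) x := by
      intro i x hx
      have p1 := h1.pde i x hx t ht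
      have p2 := h2.pde i x hx t ht
      simp only [hgdef, hwtdef, hq2def]
      rw [p1, p2]
      ring
    have hS1 : ∀ (ρ : Fin N → ℝ → ℝ → ℝ), (ClassicalSolution N T l D u f ρ0 ρ) →
        ∀ i : Fin N, Set.Countable
          {x | x ∈ Icc 0 (l i) ∧ ρ i x t = 0 ∧ deriv (fun z => ρ i z t) x ≠ 0} := by
      intro ρ hρ i
      apply aux_countable_isolated
      rintro x ⟨hxI, hx0, hxd⟩
      have hd : HasDerivAt (fun z => ρ i z t) (deriv (fun z => ρ i z t) x) x :=
        (hρ.diff_x i x hxI t htI).hasDerivAt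
      have hev := hd.eventually_ne (c := ρ i x t) hxd
      obtain ⟨ε, hε, hb⟩ := Metric.mem_nhdsWithin_iff.mp hev
      refine ⟨ε, hε, ?_⟩
      rintro y ⟨hyI, hy0, hyd⟩ hyx
      by_contra hne
      have hnn : ρ i y t ≠ ρ i x t :=
        hb ⟨Metric.mem_ball.mpr (by rwa [Real.dist_eq]), hne⟩
      rw [hx0, hy0] at hnn
      exact hnn rfl
    have hwg : ∀ i, (∫ x in (0:ℝ)..(l i), w i x * g i x) ≤
        (M i + (U i) ^ 2 / D i) * Av i + (D i / 4) * Qv i := by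
      intro i
      have hZc : Set.Countable
          (({x | x ∈ Icc 0 (l i) ∧ ρ1 i x t = 0 ∧ deriv (fun z => ρ1 i z t) x ≠ 0} ∪
            {x | x ∈ Icc 0 (l i) ∧ ρ2 i x t = 0 ∧ deriv (fun z => ρ2 i z t) x ≠ 0}) ∪
           {0, l i}) :=
        ((hS1 ρ1 h1 i).union (hS1 ρ2 h2 i)).union
          ((Set.countable_singleton _).insert _)
      have hae : ∀ᵐ x ∂(volume.restrict (Icc 0 (l i))),
          w i x * g i x ≤
            (M i + (U i) ^ 2 / D i) * (w i x) ^ 2 + (D i / 4) * (q i x) ^ 2 := by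
        have hZ0 := hZc.measure_zero (volume : Measure ℝ)
        have hnm : ∀ᵐ x ∂(volume : Measure ℝ), x ∉
            (({x | x ∈ Icc 0 (l i) ∧ ρ1 i x t = 0 ∧ deriv (fun z => ρ1 i z t) x ≠ 0} ∪
              {x | x ∈ Icc 0 (l i) ∧ ρ2 i x t = 0 ∧ deriv (fun z => ρ2 i z t) x ≠ 0}) ∪
             {0, l i}) := by
          exact MeasureTheory.measure_eq_zero_iff_ae_notMem.mp hZ0
        filter_upwards [MeasureTheory.ae_restrict_of_ae hnm,
          MeasureTheory.ae_restrict_mem measurableSet_Icc] with x hxZ hxI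
        have hx0 : x ≠ 0 := fun h => hxZ (Or.inr (by simp [h]))
        have hxl : x ≠ l i := fun h => hxZ (Or.inr (by simp [h]))
        have hxIoo : x ∈ Ioo 0 (l i) :=
          ⟨lt_of_le_of_ne hxI.1 (Ne.symm hx0), lt_of_le_of_ne hxI.2 hxl⟩
        have hgb : |g i x| ≤ M i * |w i x| + U i * |q i x| := by
          rw [hgeq i x hxIoo]
          have happ := aux_g_pointwise
            (uf := fun y => u i y t) (r1 := fun y => ρ1 i y t) (r2 := fun y => ρ2 i y t)
            (aux_slice_continuousAt (hu_cont i) hxIoo ht)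
            (h1.diff_x i x hxI t htI) (h2.diff_x i x hxI t htI)
            (hU i x hxI t htI) (fun _ => hM i x hxI t htI) (hMnn i) (hUnn i)
            (fun h0 => by
              by_contra hdd
              exact hxZ (Or.inl (Or.inl ⟨hxI, h0, hdd⟩)))
            (fun h0 => by
              by_contra hdd
              exact hxZ (Or.inl (Or.inr ⟨hxI, h0, hdd⟩)))
          simp only [hwdef, hqdef]
          exact happ
        have h3 : w i x * g i x ≤ |w i x| * |g i x| :=
          le_trans (le_abs_self _) (abs_mul _ _).le
        have h4 : |w i x| * |g i x| ≤ M i * (w i x) ^ 2 + U i * (|w i x| * |q i x|) := by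
          calc |w i x| * |g i x| ≤ |w i x| * (M i * |w i x| + U i * |q i x|) :=
                mul_le_mul_of_nonneg_left hgb (abs_nonneg _)
            _ = M i * |w i x| ^ 2 + U i * (|w i x| * |q i x|) := by ring
            _ = M i * (w i x) ^ 2 + U i * (|w i x| * |q i x|) := by rw [sq_abs]
        have h6 : U i * (|w i x| * |q i x|) ≤
            (U i) ^ 2 / D i * (w i x) ^ 2 + D i / 4 * (q i x) ^ 2 := by
          calc U i * (|w i x| * |q i x|) ≤
              (U i) ^ 2 / D i * |w i x| ^ 2 + D i / 4 * |q i x| ^ 2 := aux_young (hD i)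
            _ = (U i) ^ 2 / D i * (w i x) ^ 2 + D i / 4 * (q i x) ^ 2 := by
                rw [sq_abs, sq_abs]
        calc w i x * g i x ≤ M i * (w i x) ^ 2 + U i * (|w i x| * |q i x|) :=
              le_trans h3 h4
          _ ≤ M i * (w i x) ^ 2 +
              ((U i) ^ 2 / D i * (w i x) ^ 2 + D i / 4 * (q i x) ^ 2) := by linarith
          _ = (M i + (U i) ^ 2 / D i) * (w i x) ^ 2 + (D i / 4) * (q i x) ^ 2 := by ring
      have hle := intervalIntegral.integral_mono_ae_restrict (hl i).le
        (hInt i _ ((hcw i).mul (hcg i)))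
        (hInt i _ ((continuousOn_const.mul ((hcw i).pow 2)).add
          (continuousOn_const.mul ((hcq i).pow 2)))) hae
      calc (∫ x in (0:ℝ)..(l i), w i x * g i x)
          ≤ ∫ x in (0:ℝ)..(l i),
              ((M i + (U i) ^ 2 / D i) * (w i x) ^ 2 + (D i / 4) * (q i x) ^ 2) := hle
        _ = (M i + (U i) ^ 2 / D i) * Av i + (D i / 4) * Qv i := by
            rw [intervalIntegral.integral_add
              (hInt i (fun x => (M i + (U i) ^ 2 / D i) * (w i x) ^ 2) (continuousOn_const.mul ((hcw i).pow 2)))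
              (hInt i (fun x => (D i / 4) * (q i x) ^ 2) (continuousOn_const.mul ((hcq i).pow 2))),
              intervalIntegral.integral_const_mul, intervalIntegral.integral_const_mul,
              hAvdef, hQvdef]
    have hIBP : ∀ i, (∫ x in (0:ℝ)..(l i), w i x * q2 i x) = -(c * q i 0) - Qv i := by
      intro i
      have hibp := intervalIntegral.integral_mul_deriv_eq_deriv_mul
        (u := w i) (v := q i) (u' := q i) (v' := q2 i)
        (fun x hx => hwD i x (by rwa [uIcc_of_le (hl i).le] at hx))
        (fun x hx => hqD i x (by rwa [uIcc_of_le (hl i).le] at hx))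
        (hInt i _ (hcq i)) (hInt i _ (hcq2 i))
      rw [hdirw i, hwc i] at hibp
      rw [hibp]
      have hqq : (∫ x in (0:ℝ)..(l i), q i x * q i x) = Qv i := by
        rw [hQvdef]
        apply intervalIntegral.integral_congr
        intro x _
        ring
      rw [hqq]
      ring
    have hsplit : ∀ i, (∫ x in (0:ℝ)..(l i), 2 * w i x * wt i x) =
        2 * D i * (-(c * q i 0) - Qv i) + 2 * (∫ x in (0:ℝ)..(l i), w i x * g i x) := by
      intro i
      have e1 : (∫ x in (0:ℝ)..(l i), 2 * w i x * wt i x) =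
          ∫ x in (0:ℝ)..(l i), (2 * D i * (w i x * q2 i x) + 2 * (w i x * g i x)) := by
        apply intervalIntegral.integral_congr
        intro x _
        simp only [hgdef]
        ring
      rw [e1, intervalIntegral.integral_add
        (hInt i (fun x => 2 * D i * (w i x * q2 i x)) (continuousOn_const.mul ((hcw i).mul (hcq2 i))))
        (hInt i (fun x => 2 * (w i x * g i x)) (continuousOn_const.mul ((hcw i).mul (hcg i)))),
        intervalIntegral.integral_const_mul, intervalIntegral.integral_const_mul, hIBP i]
    have htrace : c ^ 2 ≤ a * Av j + a⁻¹ * Qv j := by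
      have hftc := intervalIntegral.integral_eq_sub_of_hasDerivAt
        (f := fun x => w j x * w j x)
        (f' := fun x => q j x * w j x + w j x * q j x)
        (fun x hx => (hwD j x (by rwa [uIcc_of_le (hl j).le] at hx)).mul
          (hwD j x (by rwa [uIcc_of_le (hl j).le] at hx)))
        (hInt j _ (((hcq j).mul (hcw j)).add ((hcw j).mul (hcq j))))
      have hc2 : c ^ 2 = ∫ x in (0:ℝ)..(l j), -(q j x * w j x + w j x * q j x) := by
        rw [intervalIntegral.integral_neg, hftc]
        show c ^ 2 = -(w j (l j) * w j (l j) - w j 0 * w j 0)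
        rw [hdirw j, hwc j]
        ring
      rw [hc2]
      have hmono := intervalIntegral.integral_mono_on (hl j).le
        (hInt j _ ((((hcq j).mul (hcw j)).add ((hcw j).mul (hcq j))).neg))
        (hInt j _ ((continuousOn_const.mul ((hcw j).pow 2)).add
          (continuousOn_const.mul ((hcq j).pow 2))))
        (fun x _ => by
          show -(q j x * w j x + w j x * q j x) ≤ a * (w j x) ^ 2 + a⁻¹ * (q j x) ^ 2
          have key : 0 ≤ (a ^ 2 * (w j x) ^ 2 + 2 * a * (w j x * q j x) + (q j x) ^ 2) / a :=
            div_nonneg (by nlinarith [sq_nonneg (a * w j x + q j x)]) ha.le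
          have expand : (a ^ 2 * (w j x) ^ 2 + 2 * a * (w j x * q j x) + (q j x) ^ 2) / a =
              a * (w j x) ^ 2 + 2 * (w j x * q j x) + a⁻¹ * (q j x) ^ 2 := by
            field_simp
          rw [expand] at key
          linarith)
      calc (∫ x in (0:ℝ)..(l j), -(q j x * w j x + w j x * q j x))
          ≤ ∫ x in (0:ℝ)..(l j), (a * (w j x) ^ 2 + a⁻¹ * (q j x) ^ 2) := hmono
        _ = a * Av j + a⁻¹ * Qv j := by
            rw [intervalIntegral.integral_add
              (hInt j (fun x => a * (w j x) ^ 2) (continuousOn_const.mul ((hcw j).pow 2)))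
              (hInt j (fun x => a⁻¹ * (q j x) ^ 2) (continuousOn_const.mul ((hcq j).pow 2))),
              intervalIntegral.integral_const_mul, intervalIntegral.integral_const_mul,
              hAvdef, hQvdef]
    have hkir : (∑ i, D i * q i 0) = -(∑ i, u i 0 t) * c := by
      have k1 := h1.kirchhoff t ht
      have k2 := h2.kirchhoff t ht
      have hterm : ∀ i : Fin N, D i * q i 0 + u i 0 t * c =
          (D i * deriv (fun y => ρ1 i y t) 0 + u i 0 t * ρ1 i 0 t) -
          (D i * deriv (fun y => ρ2 i y t) 0 + u i 0 t * ρ2 i 0 t) := by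
        intro i
        rw [← hwc i]
        simp only [hqdef, hwdef]
        ring
      have hsum : (∑ i, (D i * q i 0 + u i 0 t * c)) = 0 := by
        rw [Finset.sum_congr rfl (fun i _ => hterm i), Finset.sum_sub_distrib, k1, k2,
          sub_zero]
      rw [Finset.sum_add_distrib, ← Finset.sum_mul] at hsum
      linarith
    -- assemble everything
    have hVt : V t = ∑ i, ∫ x in (0:ℝ)..(l i), 2 * w i x * wt i x := by
      rw [hVdef]
    have hper : ∀ i : Fin N, (∫ x in (0:ℝ)..(l i), 2 * w i x * wt i x) ≤
        (-2 * c) * (D i * q i 0) + (-(3/2)) * (D i * Qv i) +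
          (2 * (M i + (U i) ^ 2 / D i)) * Av i := by
      intro i
      rw [hsplit i]
      have hh := hwg i
      nlinarith [hQvnn i, hD i]
    have hsum1 : (∑ i, ∫ x in (0:ℝ)..(l i), 2 * w i x * wt i x) ≤
        ∑ i, ((-2 * c) * (D i * q i 0) + (-(3/2)) * (D i * Qv i) +
          (2 * (M i + (U i) ^ 2 / D i)) * Av i) :=
      Finset.sum_le_sum fun i _ => hper i
    rw [Finset.sum_add_distrib, Finset.sum_add_distrib, ← Finset.mul_sum, ← Finset.mul_sum]
      at hsum1
    set S2 : ℝ := ∑ i, D i * Qv i with hS2def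
    set S3 : ℝ := ∑ i, (2 * (M i + (U i) ^ 2 / D i)) * Av i with hS3def
    have hS2nn : 0 ≤ S2 := by
      rw [hS2def]
      exact Finset.sum_nonneg fun i _ => mul_nonneg (hD i).le (hQvnn i)
    have hS1c : (-2 * c) * (∑ i, D i * q i 0) = 2 * c ^ 2 * (∑ i, u i 0 t) := by
      rw [hkir]
      ring
    have hSu : (∑ i, u i 0 t) ≤ Us := by
      rw [hUsdef]
      apply Finset.sum_le_sum
      intro i _
      exact le_trans (le_abs_self _)
        (hU i 0 (Set.left_mem_Icc.mpr (hl i).le) t htI)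
    have hf2 : 2 * c ^ 2 * (∑ i, u i 0 t) ≤ 2 * c ^ 2 * Us := by
      apply mul_le_mul_of_nonneg_left hSu
      positivity
    have hf3 : 2 * Us * c ^ 2 ≤ 2 * Us * a * Av j + 2 * Us * a⁻¹ * Qv j := by
      have := mul_le_mul_of_nonneg_left htrace (by positivity : (0:ℝ) ≤ 2 * Us)
      nlinarith [this]
    have hainv : a⁻¹ = D j / (2 * Us + 1) := by
      rw [hadef, inv_div]
    have hf5 : 2 * Us * a⁻¹ ≤ D j := by
      rw [hainv, ← mul_div_assoc, div_le_iff₀ (by linarith : (0:ℝ) < 2 * Us + 1)]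
      nlinarith [hD j, hUsnn]
    have hf6 : 2 * Us * a⁻¹ * Qv j ≤ D j * Qv j :=
      mul_le_mul_of_nonneg_right hf5 (hQvnn j)
    have hf7 : D j * Qv j ≤ S2 := by
      rw [hS2def]
      exact Finset.single_le_sum (fun i _ => mul_nonneg (hD i).le (hQvnn i))
        (Finset.mem_univ j)
    have hf8 : 2 * Us * a * Av j ≤ 2 * Us * a * E t := by
      apply mul_le_mul_of_nonneg_left (hAvE j)
      positivity
    have hf9 : S3 ≤ (∑ i, 2 * (M i + (U i) ^ 2 / D i)) * E t := by
      rw [hS3def, Finset.sum_mul]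
      apply Finset.sum_le_sum
      intro i _
      apply mul_le_mul_of_nonneg_left (hAvE i)
      have := hMnn i
      have := hD i
      have := sq_nonneg (U i)
      positivity
    have hKE : K * E t = (∑ i, 2 * (M i + (U i) ^ 2 / D i)) * E t + 2 * Us * a * E t := by
      rw [hKdef]
      ring
    clear_value w q q2 wt g c Av Qv S2 S3 a Us K E V
    rw [hVt, hKE]
    linarith [hsum1, hS1c, hf2, hf3, hf6, hf7, hf8, hf9, hS2nn]
  have hEzero : ∀ t ∈ Icc 0 T, E t = 0 := by
    have hexp : ∀ t : ℝ, HasDerivAt (fun s => Real.exp (-K * s)) (Real.exp (-K * t) * (-K)) t := by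
      intro t
      have hlin : HasDerivAt (fun s : ℝ => -K * s) (-K) t := by
        simpa using (hasDerivAt_id t).const_mul (-K)
      exact hlin.exp
    have hφanti : AntitoneOn (fun t => E t * Real.exp (-K * t)) (Icc 0 T) := by
      apply antitoneOn_of_deriv_nonpos (convex_Icc 0 T)
      · exact hEcont.mul
          (Real.continuous_exp.comp (continuous_const.mul continuous_id)).continuousOn
      · intro t htI
        rw [interior_Icc] at htI
        exact ((hEderiv t htI).mul (hexp t)).differentiableAt.differentiableWithinAt
      · intro t htI
        rw [interior_Icc] at htI
        have hd := (hEderiv t htI).fun_mul (hexp t)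
        rw [hd.deriv]
        have hv := hVK t htI
        have he := hEnn t
        have hp := (Real.exp_pos (-K * t)).le
        nlinarith [mul_le_mul_of_nonneg_right hv hp]
    intro t ht
    have hle : E t * Real.exp (-K * t) ≤ E 0 * Real.exp (-K * 0) :=
      hφanti (left_mem_Icc.mpr hT.le) ht ht.1
    rw [hE0, zero_mul] at hle
    have hp : 0 < Real.exp (-K * t) := Real.exp_pos _
    refine le_antisymm ?_ (hEnn t)
    by_contra hlt
    push_neg at hlt
    nlinarith [mul_pos hlt hp]
  intro i x hx t ht
  have hsum := hEzero t ht
  rw [hEdef] at hsum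
  have hAi : (∫ x in (0:ℝ)..(l i), (ρ1 i x t - ρ2 i x t) ^ 2) = 0 :=
    (Finset.sum_eq_zero_iff_of_nonneg (fun i _ => hA_nonneg i t)).mp hsum i (Finset.mem_univ i)
  have hcw : ContinuousOn (fun x => (ρ1 i x t - ρ2 i x t) ^ 2) (Icc 0 (l i)) :=
    aux_slice_x (F := fun p : ℝ × ℝ => (ρ1 i p.1 p.2 - ρ2 i p.1 p.2) ^ 2)
      (((h1.cont i).sub (h2.cont i)).pow 2) ht
  have hz := aux_eq_zero_of_integral_zero (hl i) hcw (fun x _ => sq_nonneg _) hAi x hx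
  have := pow_eq_zero_iff (n := 2) (by norm_num) |>.mp hz
  linarith [this, sub_eq_zero.mp this]
end

section
/- Positivity preservation for the Fokker–Planck system on a star graph: if ρ = (ρ_i)_{i=1}^N is a classical solution of the Fokker–Planck system with f_i ≡ 0 and if the initial data satisfy ρ⁰_i(x) ≥ 0 for all x ∈ [0,l_i] and all i = 1, …, N, then ρ_i(x,t) ≥ 0 for all (x,t) ∈ [0,l_i] × [0,T] and all i = 1, …, N. -/
open MeasureTheory Set Filter Topology

lemma deriv_nonneg_right' {f : ℝ → ℝ} {x0 b d : ℝ} (hx : x0 < b)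
    (hf : HasDerivAt f d x0) (hmin : ∀ x ∈ Ioc x0 b, f x0 ≤ f x) : 0 ≤ d := by
  rw [hasDerivAt_iff_tendsto_slope] at hf
  have h' : Tendsto (slope f x0) (𝓝[>] x0) (𝓝 d) :=
    hf.mono_left (nhdsWithin_mono _ (fun y hy => ne_of_gt hy))
  refine ge_of_tendsto h' ?_
  filter_upwards [Ioc_mem_nhdsGT hx] with y hy
  have : 0 ≤ f y - f x0 := sub_nonneg.mpr (hmin y hy)
  have h2 : 0 < y - x0 := sub_pos.mpr hy.1
  rw [slope_def_field]
  positivity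

lemma deriv_nonpos_left' {f : ℝ → ℝ} {t0 a d : ℝ} (ha : a < t0)
    (hf : HasDerivAt f d t0) (hmin : ∀ t ∈ Ico a t0, f t0 ≤ f t) : d ≤ 0 := by
  rw [hasDerivAt_iff_tendsto_slope] at hf
  have h' : Tendsto (slope f t0) (𝓝[<] t0) (𝓝 d) :=
    hf.mono_left (nhdsWithin_mono _ (fun y hy => ne_of_lt hy))
  refine le_of_tendsto h' ?_
  filter_upwards [Ico_mem_nhdsLT ha] with y hy
  have h1 : 0 ≤ f y - f t0 := sub_nonneg.mpr (hmin y hy)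
  have h2 : y - t0 < 0 := sub_neg.mpr hy.2
  rw [slope_def_field]
  exact div_nonpos_of_nonneg_of_nonpos h1 h2.le

lemma second_deriv_test_min' {f : ℝ → ℝ} {x0 : ℝ} (hmin : IsLocalMin f x0)
    (hd : ∀ᶠ x in 𝓝 x0, DifferentiableAt ℝ f x)
    (hd2 : DifferentiableAt ℝ (deriv f) x0) : 0 ≤ deriv (deriv f) x0 := by
  by_contra h
  push_neg at h
  have h0 : deriv f x0 = 0 := hmin.deriv_eq_zero
  have h2 : HasDerivAt (deriv f) (deriv (deriv f) x0) x0 := hd2.hasDerivAt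
  rw [hasDerivAt_iff_tendsto_slope] at h2
  have h' : Tendsto (slope (deriv f) x0) (𝓝[>] x0) (𝓝 (deriv (deriv f) x0)) :=
    h2.mono_left (nhdsWithin_mono _ (fun y hy => ne_of_gt hy))
  have hev : ∀ᶠ x in 𝓝[>] x0, deriv f x < 0 := by
    filter_upwards [h'.eventually_lt_const h, self_mem_nhdsWithin] with y hy hy'
    rw [slope_def_field, h0, sub_zero] at hy
    have h3 : (0:ℝ) < y - x0 := sub_pos.mpr hy'
    rcases div_neg_iff.mp hy with ⟨_, hb⟩ | ⟨ha, _⟩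
    · linarith
    · exact ha
  obtain ⟨b, hb, hball⟩ := (hev.and ((hd.and hmin).filter_mono nhdsWithin_le_nhds)).exists_mem
  rw [mem_nhdsGT_iff_exists_Ioc_subset] at hb
  obtain ⟨u, hu, hsub⟩ := hb
  have hu' : x0 < u := hu
  have hanti : StrictAntiOn f (Icc x0 u) := by
    apply strictAntiOn_of_deriv_neg (convex_Icc _ _)
    · intro y hy
      rcases eq_or_lt_of_le hy.1 with rfl | hlt
      · exact (hd.self_of_nhds).continuousAt.continuousWithinAt
      · exact ((hball y (hsub ⟨hlt, hy.2⟩)).2.1).continuousAt.continuousWithinAt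
    · intro y hy
      rw [interior_Icc] at hy
      exact (hball y (hsub ⟨hy.1, hy.2.le⟩)).1
  have h3 : f u < f x0 := hanti ⟨le_rfl, hu'.le⟩ ⟨hu'.le, le_rfl⟩ hu'
  have h4 : f x0 ≤ f u := (hball u (hsub ⟨hu', le_rfl⟩)).2.2
  linarith


set_option maxHeartbeats 2000000 in
/-- **Positivity preservation for the Fokker–Planck system on a star graph.**
If `ρ` is a classical solution with `f ≡ 0` and nonnegative initial data, then
`ρ i x t ≥ 0` on `[0, l i] × [0, T]` for every edge `i`. -/
theorem positivity_preservation
    (N : ℕ) (hN : 0 < N) (T : ℝ) (hT : 0 < T)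
    (l D : Fin N → ℝ) (hl : ∀ i, 0 < l i) (hD : ∀ i, 0 < D i)
    (u : Fin N → ℝ → ℝ → ℝ)
    (hu_cont : ∀ i, ContinuousOn (fun p : ℝ × ℝ => u i p.1 p.2)
      (Icc 0 (l i) ×ˢ Icc 0 T))
    (hu_bdd : ∀ i, ∃ C, ∀ x ∈ Icc 0 (l i), ∀ t ∈ Icc 0 T, |u i x t| ≤ C)
    (hux_cont : ∀ i, ContinuousOn (fun p : ℝ × ℝ => deriv (fun y => u i y p.2) p.1)
      (Icc 0 (l i) ×ˢ Icc 0 T))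
    (ρ0 : Fin N → ℝ → ℝ) (ρ : Fin N → ℝ → ℝ → ℝ)
    (hρ : ClassicalSolution N T l D u (fun _ _ _ => 0) ρ0 ρ)
    (hρ0 : ∀ i, ∀ x ∈ Icc 0 (l i), 0 ≤ ρ0 i x) :
    ∀ i, ∀ x ∈ Icc 0 (l i), ∀ t ∈ Icc 0 T, 0 ≤ ρ i x t := by
  obtain ⟨cont, diff_t, diff_x, diff_xx, cont_t, cont_x, cont_xx, pde, init,
    kirchhoff, vertex, dirichlet⟩ := hρ
  haveI : Nonempty (Fin N) := Fin.pos_iff_nonempty.mp hN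
  have hne : (Finset.univ : Finset (Fin N)).Nonempty := Finset.univ_nonempty
  choose C hC using hu_bdd
  set Cu : ℝ := max 0 (Finset.univ.sup' hne C) with hCu_def
  have hCu0 : 0 ≤ Cu := le_max_left _ _
  have hCu : ∀ i, ∀ x ∈ Icc 0 (l i), ∀ t ∈ Icc 0 T, |u i x t| ≤ Cu := fun i x hx t ht =>
    (hC i x hx t ht).trans ((Finset.le_sup' C (Finset.mem_univ i)).trans (le_max_right _ _))
  have hCx' : ∀ i, ∃ B, ∀ x ∈ Icc 0 (l i), ∀ t ∈ Icc 0 T,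
      |deriv (fun y => u i y t) x| ≤ B := by
    intro i
    obtain ⟨B, hB⟩ := (isCompact_Icc.prod isCompact_Icc).exists_bound_of_continuousOn
      (hux_cont i)
    exact ⟨B, fun x hx t ht => by
      simpa [Real.norm_eq_abs] using hB (x, t) ⟨hx, ht⟩⟩
  choose Cx hCx using hCx'
  set Cux : ℝ := max 0 (Finset.univ.sup' hne Cx) with hCux_def
  have hCux0 : 0 ≤ Cux := le_max_left _ _
  have hCux : ∀ i, ∀ x ∈ Icc 0 (l i), ∀ t ∈ Icc 0 T,
      |deriv (fun y => u i y t) x| ≤ Cux := fun i x hx t ht =>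
    (hCx i x hx t ht).trans ((Finset.le_sup' Cx (Finset.mem_univ i)).trans (le_max_right _ _))
  set Dsum : ℝ := ∑ i, D i with hDsum_def
  have hDsum : 0 < Dsum := Finset.sum_pos (fun i _ => hD i) hne
  set Dmax : ℝ := Finset.univ.sup' hne D with hDmax_def
  have hDmax : ∀ i, D i ≤ Dmax := fun i => Finset.le_sup' D (Finset.mem_univ i)
  have hDmax0 : 0 < Dmax := (hD (Classical.arbitrary _)).trans_le (hDmax _)
  set K : ℝ := ((N : ℝ) * Cu + 1) / Dsum with hK_def
  have hK : 0 < K := by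
    apply div_pos ?_ hDsum
    positivity
  have hKD : K * Dsum = (N : ℝ) * Cu + 1 := div_mul_cancel₀ _ (ne_of_gt hDsum)
  set lam : ℝ := 2 * Dmax * K ^ 2 + Cu * K + Cux + 1 with hlam_def
  have H : ∀ s ∈ Ioo (0:ℝ) T, ∀ i, ∀ x ∈ Icc 0 (l i), ∀ t ∈ Icc 0 s, 0 ≤ ρ i x t := by
    intro s hs
    set v : Fin N → ℝ → ℝ → ℝ :=
      fun i x t => Real.exp (-(lam * t)) * ((1 + K * x) * ρ i x t) with hv_def
    have hIccsub : Icc (0:ℝ) s ⊆ Icc 0 T := Icc_subset_Icc le_rfl hs.2.le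
    have hvcont : ∀ i, ContinuousOn (fun p : ℝ × ℝ => v i p.1 p.2)
        (Icc 0 (l i) ×ˢ Icc 0 s) := by
      intro i
      rw [hv_def]
      apply ContinuousOn.mul
      · exact (Real.continuous_exp.comp (continuous_const.mul continuous_snd).neg).continuousOn
      · exact ContinuousOn.mul (by fun_prop) ((cont i).mono (prod_mono_right hIccsub))
    have hmin' : ∀ i, ∃ p : ℝ × ℝ, p ∈ (Icc (0:ℝ) (l i) ×ˢ Icc (0:ℝ) s) ∧
        ∀ q ∈ (Icc (0:ℝ) (l i) ×ˢ Icc (0:ℝ) s), v i p.1 p.2 ≤ v i q.1 q.2 := by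
      intro i
      obtain ⟨p, hp, hmin⟩ := (isCompact_Icc.prod isCompact_Icc).exists_isMinOn
        ⟨(0, 0), ⟨⟨le_rfl, (hl i).le⟩, ⟨le_rfl, hs.1.le⟩⟩⟩ (hvcont i)
      exact ⟨p, hp, fun q hq => hmin hq⟩
    choose p hp hpmin using hmin'
    obtain ⟨i0, -, hi0⟩ := Finset.exists_min_image Finset.univ
      (fun i => v i (p i).1 (p i).2) hne
    set x0 : ℝ := (p i0).1 with hx0_def
    set t0 : ℝ := (p i0).2 with ht0_def
    have hglob : ∀ j, ∀ x ∈ Icc 0 (l j), ∀ t ∈ Icc 0 s, v i0 x0 t0 ≤ v j x t := by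
      intro j x hx t ht
      exact (hi0 j (Finset.mem_univ j)).trans (hpmin j (x, t) ⟨hx, ht⟩)
    suffices hm0 : 0 ≤ v i0 x0 t0 by
      intro i x hx t ht
      have h1 := hglob i x hx t ht
      have hE : 0 < Real.exp (-(lam * t)) := Real.exp_pos _
      have hG : (0:ℝ) < 1 + K * x := by nlinarith [hx.1]
      have h2 : 0 ≤ Real.exp (-(lam * t)) * ((1 + K * x) * ρ i x t) := hm0.trans h1
      nlinarith [h2, mul_pos hE hG]
    by_contra hmneg
    push_neg at hmneg
    have hx0 : x0 ∈ Icc 0 (l i0) := (hp i0).1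
    have ht0 : t0 ∈ Icc 0 s := (hp i0).2
    have ht0T : t0 ∈ Icc 0 T := hIccsub ht0
    have hE : 0 < Real.exp (-(lam * t0)) := Real.exp_pos _
    have hG : (0:ℝ) < 1 + K * x0 := by nlinarith [hx0.1]
    have hG1 : (1:ℝ) ≤ 1 + K * x0 := by nlinarith [hx0.1]
    have hveq : v i0 x0 t0 = Real.exp (-(lam * t0)) * ((1 + K * x0) * ρ i0 x0 t0) := by
      rw [hv_def]
    have hr0 : ρ i0 x0 t0 < 0 := by
      by_contra hcon
      push_neg at hcon
      rw [hveq] at hmneg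
      nlinarith [hmneg, mul_pos hE hG, hcon]
    have ht0pos : 0 < t0 := by
      rcases lt_or_eq_of_le ht0.1 with h | h
      · exact h
      · exfalso
        have h0 : ρ i0 x0 t0 = ρ0 i0 x0 := by rw [← h]; exact init i0 x0 hx0
        have := hρ0 i0 x0 hx0
        linarith
    have ht0T' : t0 ∈ Ioo 0 T := ⟨ht0pos, lt_of_le_of_lt ht0.2 hs.2⟩
    have hx0l : x0 < l i0 := by
      rcases lt_or_eq_of_le hx0.2 with h | h
      · exact h
      · exfalso
        have hdir := dirichlet i0 t0 ht0T'
        rw [h] at hr0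
        linarith
    -- time derivative inequality
    have hder_t : HasDerivAt (fun t => v i0 x0 t)
        (Real.exp (-(lam * t0)) * -lam * ((1 + K * x0) * ρ i0 x0 t0) +
          Real.exp (-(lam * t0)) * ((1 + K * x0) * deriv (ρ i0 x0) t0)) t0 := by
      have h1 : HasDerivAt (fun t : ℝ => -(lam * t)) (-lam) t0 := by
        simpa using ((hasDerivAt_id t0).const_mul lam).fun_neg
      have h2 := h1.exp
      have h3 : HasDerivAt (fun t => (1 + K * x0) * ρ i0 x0 t)
          ((1 + K * x0) * deriv (ρ i0 x0) t0) t0 :=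
        HasDerivAt.const_mul _ (diff_t i0 x0 hx0 t0 ht0T).hasDerivAt
      have h4 := h2.mul h3
      rw [hv_def]
      exact h4
    have hdt_le : deriv (ρ i0 x0) t0 ≤ lam * ρ i0 x0 t0 := by
      have hle := deriv_nonpos_left' ht0pos hder_t
        (fun t ht => hglob i0 x0 hx0 t ⟨ht.1, ht.2.le.trans ht0.2⟩)
      nlinarith [hle, mul_pos hE hG]
    rcases eq_or_lt_of_le hx0.1 with hx00 | hx0pos
    · -- vertex case
      have hvx : ∀ j, ρ j 0 t0 = ρ i0 x0 t0 := by
        intro j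
        rcases eq_or_ne j i0 with rfl | hji
        · rw [hx00]
        · rw [vertex j i0 hji t0 ht0T', hx00]
      have hdx : ∀ j, 0 ≤ K * ρ i0 x0 t0 + deriv (fun y => ρ j y t0) 0 := by
        intro j
        have h0j : (0:ℝ) ∈ Icc 0 (l j) := ⟨le_rfl, (hl j).le⟩
        have hder : HasDerivAt (fun x => v j x t0)
            (Real.exp (-(lam * t0)) *
              (K * ρ j 0 t0 + (1 + K * 0) * deriv (fun y => ρ j y t0) 0)) 0 := by
          have h1 : HasDerivAt (fun x : ℝ => 1 + K * x) K 0 := by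
            simpa using ((hasDerivAt_id (0:ℝ)).const_mul K).const_add 1
          have h2 := (diff_x j 0 h0j t0 ht0T).hasDerivAt
          have h3 := HasDerivAt.const_mul (Real.exp (-(lam * t0))) (h1.mul h2)
          rw [hv_def]
          exact h3
        have h2eq : v j 0 t0 = v i0 x0 t0 := by
          simp only [hv_def]
          rw [hvx j]
          rw [← hx00]
        have hminj : ∀ x ∈ Ioc 0 (l j), (fun x => v j x t0) 0 ≤ (fun x => v j x t0) x := by
          intro x hxx
          exact h2eq.le.trans (hglob j x ⟨hxx.1.le, hxx.2⟩ t0 ht0)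
        have hd := deriv_nonneg_right' (hl j) hder hminj
        rw [hvx j] at hd
        nlinarith [hd, hE]
      have hk := kirchhoff t0 ht0T'
      have hterm : ∀ j ∈ Finset.univ, Cu * ρ i0 x0 t0 - D j * (K * ρ i0 x0 t0) ≤
          D j * deriv (fun y => ρ j y t0) 0 + u j 0 t0 * ρ j 0 t0 := by
        intro j _
        have h1 := hdx j
        have habs := abs_le.mp (hCu j 0 ⟨le_rfl, (hl j).le⟩ t0 ht0T)
        rw [hvx j]
        have e1 : 0 ≤ (Cu - u j 0 t0) * (-(ρ i0 x0 t0)) :=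
          mul_nonneg (by linarith [habs.2]) (by linarith)
        have e2 : 0 ≤ D j * (K * ρ i0 x0 t0 + deriv (fun y => ρ j y t0) 0) :=
          mul_nonneg (hD j).le h1
        nlinarith [e1, e2]
      have hsum := Finset.sum_le_sum hterm
      rw [hk] at hsum
      have hsc : ∑ j : Fin N, (Cu * ρ i0 x0 t0 - D j * (K * ρ i0 x0 t0)) =
          (N : ℝ) * (Cu * ρ i0 x0 t0) - Dsum * (K * ρ i0 x0 t0) := by
        rw [Finset.sum_sub_distrib, Finset.sum_const, Finset.card_univ, Fintype.card_fin,
          nsmul_eq_mul, ← Finset.sum_mul, ← hDsum_def]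
      rw [hsc] at hsum
      nlinarith [hsum, hKD, hr0]
    · -- interior case
      have hx0I : x0 ∈ Ioo 0 (l i0) := ⟨hx0pos, hx0l⟩
      have hDer : ∀ x ∈ Icc 0 (l i0), HasDerivAt (fun y => v i0 y t0)
          (Real.exp (-(lam * t0)) *
            (K * ρ i0 x t0 + (1 + K * x) * deriv (fun y => ρ i0 y t0) x)) x := by
        intro x hx
        have h1 : HasDerivAt (fun y : ℝ => 1 + K * y) K x := by
          simpa using ((hasDerivAt_id x).const_mul K).const_add 1
        have h2 := (diff_x i0 x hx t0 ht0T).hasDerivAt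
        have h3 := HasDerivAt.const_mul (Real.exp (-(lam * t0))) (h1.mul h2)
        rw [hv_def]
        exact h3
      have hφmin : IsLocalMin (fun x => v i0 x t0) x0 :=
        IsMinOn.isLocalMin (isMinOn_iff.mpr (fun x hx => hglob i0 x hx t0 ht0))
          (Icc_mem_nhds hx0pos hx0l)
      have hd0 : Real.exp (-(lam * t0)) *
          (K * ρ i0 x0 t0 + (1 + K * x0) * deriv (fun y => ρ i0 y t0) x0) = 0 := by
        rw [← (hDer x0 hx0).deriv]
        exact hφmin.deriv_eq_zero
      have hGRX : (1 + K * x0) * deriv (fun y => ρ i0 y t0) x0 = -(K * ρ i0 x0 t0) := by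
        rcases mul_eq_zero.mp hd0 with h | h
        · exact absurd h (ne_of_gt hE)
        · linarith
      have hψ : HasDerivAt
          (fun x => Real.exp (-(lam * t0)) *
            (K * ρ i0 x t0 + (1 + K * x) * deriv (fun y => ρ i0 y t0) x))
          (Real.exp (-(lam * t0)) * (K * deriv (fun y => ρ i0 y t0) x0 +
            (K * deriv (fun y => ρ i0 y t0) x0 +
              (1 + K * x0) * deriv (fun y => deriv (fun z => ρ i0 z t0) y) x0))) x0 := by
        have h1 := (diff_x i0 x0 hx0 t0 ht0T).hasDerivAt
        have h2 := (diff_xx i0 x0 hx0 t0 ht0T).hasDerivAt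
        have h3 : HasDerivAt (fun y : ℝ => 1 + K * y) K x0 := by
          simpa using ((hasDerivAt_id x0).const_mul K).const_add 1
        exact HasDerivAt.const_mul _ ((h1.const_mul K).add (h3.mul h2))
      have hEv : deriv (fun x => v i0 x t0) =ᶠ[𝓝 x0]
          (fun x => Real.exp (-(lam * t0)) *
            (K * ρ i0 x t0 + (1 + K * x) * deriv (fun y => ρ i0 y t0) x)) := by
        filter_upwards [Ioo_mem_nhds hx0pos hx0l] with y hy
        exact (hDer y ⟨hy.1.le, hy.2.le⟩).deriv
      have hF3 : 0 ≤ Real.exp (-(lam * t0)) * (K * deriv (fun y => ρ i0 y t0) x0 +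
          (K * deriv (fun y => ρ i0 y t0) x0 +
            (1 + K * x0) * deriv (fun y => deriv (fun z => ρ i0 z t0) y) x0)) := by
        have heq2 : deriv (deriv (fun x => v i0 x t0)) x0 =
            Real.exp (-(lam * t0)) * (K * deriv (fun y => ρ i0 y t0) x0 +
              (K * deriv (fun y => ρ i0 y t0) x0 +
                (1 + K * x0) * deriv (fun y => deriv (fun z => ρ i0 z t0) y) x0)) := by
          rw [hEv.deriv_eq]
          exact hψ.deriv
        rw [← heq2]
        apply second_deriv_test_min' hφmin
        · filter_upwards [Ioo_mem_nhds hx0pos hx0l] with y hy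
          exact (hDer y ⟨hy.1.le, hy.2.le⟩).differentiableAt
        · rw [hEv.differentiableAt_iff]
          exact hψ.differentiableAt
      have hpde := pde i0 x0 hx0I t0 ht0T'
      obtain ⟨U, UX, hU, hUX, hF4⟩ : ∃ U UX : ℝ, |U| ≤ Cu ∧ |UX| ≤ Cux ∧
          deriv (fun y => u i0 y t0 * ρ i0 y t0) x0 =
            UX * ρ i0 x0 t0 + U * deriv (fun y => ρ i0 y t0) x0 := by
        by_cases hHd : DifferentiableAt ℝ (fun y => u i0 y t0 * ρ i0 y t0) x0
        · refine ⟨u i0 x0 t0, deriv (fun y => u i0 y t0) x0,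
            hCu i0 x0 hx0 t0 ht0T, hCux i0 x0 hx0 t0 ht0T, ?_⟩
          have hρdx := diff_x i0 x0 hx0 t0 ht0T
          have hudiff : DifferentiableAt ℝ (fun y => u i0 y t0) x0 := by
            have hcont : ContinuousAt (fun y => ρ i0 y t0) x0 := hρdx.continuousAt
            have hev2 : (fun y => u i0 y t0) =ᶠ[𝓝 x0]
                (fun y => (u i0 y t0 * ρ i0 y t0) / ρ i0 y t0) := by
              filter_upwards [hcont.eventually_ne (ne_of_lt hr0)] with y hy
              rw [mul_div_assoc, div_self hy, mul_one]
            rw [hev2.differentiableAt_iff]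
            exact hHd.div hρdx (ne_of_lt hr0)
          exact (hudiff.hasDerivAt.mul hρdx.hasDerivAt).deriv
        · refine ⟨0, 0, by simpa using hCu0, by simpa using hCux0, ?_⟩
          rw [deriv_zero_of_not_differentiableAt hHd]
          ring
      rw [hF4] at hpde
      -- arithmetic contradiction
      have hF3' : 0 ≤ 2 * (K * deriv (fun y => ρ i0 y t0) x0) +
          (1 + K * x0) * deriv (fun y => deriv (fun z => ρ i0 z t0) y) x0 := by
        nlinarith [hF3, hE]
      have h3' : 2 * K ^ 2 * ρ i0 x0 t0 ≤ (1 + K * x0) ^ 2 *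
          deriv (fun y => deriv (fun z => ρ i0 z t0) y) x0 := by
        have e1 : 0 ≤ (1 + K * x0) * (2 * (K * deriv (fun y => ρ i0 y t0) x0) +
            (1 + K * x0) * deriv (fun y => deriv (fun z => ρ i0 z t0) y) x0) :=
          mul_nonneg hG.le hF3'
        have e2 : 2 * K * ((1 + K * x0) * deriv (fun y => ρ i0 y t0) x0) =
            2 * K * (-(K * ρ i0 x0 t0)) := by rw [hGRX]
        nlinarith [e1, e2]
      have e4 : (1 + K * x0) ^ 2 * deriv (ρ i0 x0) t0 =
          D i0 * ((1 + K * x0) ^ 2 * deriv (fun y => deriv (fun z => ρ i0 z t0) y) x0) +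
            (1 + K * x0) ^ 2 * (UX * ρ i0 x0 t0) -
            (1 + K * x0) * U * (K * ρ i0 x0 t0) := by
        linear_combination (1 + K * x0) ^ 2 * hpde + (1 + K * x0) * U * hGRX
      have b1 : D i0 * (2 * K ^ 2 * ρ i0 x0 t0) ≤
          D i0 * ((1 + K * x0) ^ 2 * deriv (fun y => deriv (fun z => ρ i0 z t0) y) x0) :=
        mul_le_mul_of_nonneg_left h3' (hD i0).le
      have b2 : Dmax * (2 * K ^ 2 * ρ i0 x0 t0) ≤ D i0 * (2 * K ^ 2 * ρ i0 x0 t0) := by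
        nlinarith [mul_nonneg (mul_nonneg (sub_nonneg.mpr (hDmax i0)) (sq_nonneg K))
          (neg_nonneg.mpr hr0.le)]
      have b3 : (1 + K * x0) ^ 2 * (Cux * ρ i0 x0 t0) ≤
          (1 + K * x0) ^ 2 * (UX * ρ i0 x0 t0) := by
        nlinarith [mul_nonneg (mul_nonneg (sq_nonneg (1 + K * x0))
          (sub_nonneg.mpr (abs_le.mp hUX).2)) (neg_nonneg.mpr hr0.le)]
      have b4 : (1 + K * x0) ^ 2 * (Cu * K * ρ i0 x0 t0) ≤
          -((1 + K * x0) * U * (K * ρ i0 x0 t0)) := by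
        have m1 : 0 ≤ ((1 + K * x0) * K * (-(ρ i0 x0 t0))) * (U + Cu) :=
          mul_nonneg (mul_nonneg (mul_nonneg hG.le hK.le) (neg_nonneg.mpr hr0.le))
            (by linarith [(abs_le.mp hU).1])
        have m2 : 0 ≤ ((K * x0) * (1 + K * x0) * Cu * K) * (-(ρ i0 x0 t0)) :=
          mul_nonneg (mul_nonneg (mul_nonneg
            (mul_nonneg (by nlinarith [hx0.1, hK] : (0:ℝ) ≤ K * x0) hG.le) hCu0) hK.le)
            (neg_nonneg.mpr hr0.le)
        nlinarith [m1, m2]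
      have b5 : (1 + K * x0) ^ 2 * deriv (ρ i0 x0) t0 ≤
          (1 + K * x0) ^ 2 * (lam * ρ i0 x0 t0) :=
        mul_le_mul_of_nonneg_left hdt_le (sq_nonneg _)
      have hGsq1 : (1:ℝ) ≤ (1 + K * x0) ^ 2 := by nlinarith [hG1]
      have hint1 : 0 ≤ (2 * Dmax * K ^ 2) * (((1 + K * x0) ^ 2 - 1) * (-(ρ i0 x0 t0))) :=
        mul_nonneg (by positivity) (mul_nonneg (by linarith) (neg_nonneg.mpr hr0.le))
      have hint2 : 0 ≤ ((1 + K * x0) ^ 2 - 1) * (-(ρ i0 x0 t0)) :=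
        mul_nonneg (by linarith) (neg_nonneg.mpr hr0.le)
      rw [hlam_def] at b5
      linarith [e4, b1, b2, b3, b4, b5, hint1, hint2, hr0]
  -- conclude
  intro i x hx t ht
  rcases eq_or_lt_of_le ht.1 with h0 | htpos
  · rw [← h0, init i x hx]
    exact hρ0 i x hx
  rcases eq_or_lt_of_le ht.2 with hT' | htT
  · subst hT'
    have hcOn : ContinuousOn (fun τ => ρ i x τ) (Icc 0 t) :=
      (cont i).comp (continuous_const.prodMk continuous_id).continuousOn
        (fun τ hτ => ⟨hx, hτ⟩)
    have h2 : Tendsto (fun τ => ρ i x τ) (𝓝[Ioo (0:ℝ) t] t) (𝓝 (ρ i x t)) :=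
      ((hcOn t (right_mem_Icc.mpr (by linarith))).mono Ioo_subset_Icc_self).tendsto
    haveI : (𝓝[Ioo (0:ℝ) t] t).NeBot := by
      rw [nhdsWithin_Ioo_eq_nhdsLT htpos]
      infer_instance
    refine ge_of_tendsto h2 ?_
    filter_upwards [self_mem_nhdsWithin] with τ hτ
    exact H τ hτ i x hx τ ⟨hτ.1.le, le_rfl⟩
  · exact H t ⟨htpos, htT⟩ i x hx t ⟨htpos.le, le_rfl⟩
end

section
/- Exact left integral of the shifted Legendre scaling functions (Result 1): for all J ≥ 1, n ∈ {1, …, 2^{J−1}}, natural m, and t ∈ [0,1], the left integral ∫_0^t φ_{n,m}^J(s) ds equals: 0 if t ≤ (n−1)/2^{J−1}; √((2m+1)/2^{J−1}) ∑_{i=0}^{m} ( c_{i,m}/(i+1) ) (2^{J−1} t − n + 1)^{i+1} if (n−1)/2^{J−1} < t < n/2^{J−1}; √(1/2^{J−1}) if t ≥ n/2^{J−1} and m = 0; and 0 if t ≥ n/2^{J−1} and m ≥ 1. -/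
open MeasureTheory

/-- The coefficients `c_{i,m}` of the shifted Legendre polynomials:
`c_{i,m} = (∏_{j=0}^{m−1} (1+i+j)) / (∏_{j=0, j≠i}^{m} (i−j))` (and `c_{0,0} = 1`). -/
noncomputable def legendreCoeff (m i : ℕ) : ℝ :=
  (∏ j ∈ Finset.range m, ((1 : ℝ) + i + j)) /
    (∏ j ∈ (Finset.range (m + 1)).erase i, ((i : ℝ) - j))

/-- The shifted Legendre polynomial `L_m(t) = ∑_{i=0}^{m} c_{i,m} t^i` on `[0,1]`. -/
noncomputable def shiftedLegendre (m : ℕ) (t : ℝ) : ℝ :=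
  ∑ i ∈ Finset.range (m + 1), legendreCoeff m i * t ^ i

/-- The shifted Legendre scaling function `φ_{n,m}^J` on `[0,1]`:
`φ_{n,m}^J(t) = 2^{(J−1)/2} √(2m+1) L_m(2^{J−1} t − n + 1)` on
`[(n−1)/2^{J−1}, n/2^{J−1})`, and `0` otherwise. -/
noncomputable def scalingFun (J n m : ℕ) (t : ℝ) : ℝ :=
  if ((n : ℝ) - 1) / 2 ^ (J - 1) ≤ t ∧ t < (n : ℝ) / 2 ^ (J - 1) then
    Real.sqrt (2 ^ (J - 1)) * Real.sqrt (2 * m + 1) *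
      shiftedLegendre m (2 ^ (J - 1) * t - n + 1)
  else 0

lemma prodNum (m i : ℕ) :
    (∏ j ∈ Finset.range m, ((1:ℝ) + i + j)) = (i + m).factorial / i.factorial := by
  induction m with
  | zero =>
    have h : (i.factorial : ℝ) ≠ 0 := Nat.cast_ne_zero.2 i.factorial_ne_zero
    simp [div_self h]
  | succ m ih =>
    have h : (i.factorial : ℝ) ≠ 0 := Nat.cast_ne_zero.2 i.factorial_ne_zero
    rw [Finset.prod_range_succ, ih, show i + (m+1) = (i+m)+1 by omega, Nat.factorial_succ]
    push_cast
    field_simp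
    ring

lemma prodLt (i : ℕ) : (∏ j ∈ Finset.range i, ((i:ℝ) - j)) = i.factorial := by
  rw [← Finset.prod_range_reflect]
  rw [← Nat.cast_inj (R := ℝ) |>.2 (Finset.prod_range_add_one_eq_factorial i)]
  push_cast
  apply Finset.prod_congr rfl
  intro j hj
  simp only [Finset.mem_range] at hj
  have : ((i - 1 - j : ℕ) : ℝ) = (i:ℝ) - 1 - j := by
    have : i - 1 - j = i - (1 + j) := by omega
    rw [this]
    push_cast [Nat.cast_sub (by omega : 1 + j ≤ i)]
    ring
  rw [this]; ring

lemma prodErase (m i : ℕ) (h : i ≤ m) :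
    (∏ j ∈ (Finset.range (m+1)).erase i, ((i:ℝ) - j)) =
      (-1:ℝ)^(m-i) * i.factorial * (m-i).factorial := by
  have hset : (Finset.range (m+1)).erase i = Finset.range i ∪ Finset.Ico (i+1) (m+1) := by
    ext j; simp [Finset.mem_erase, Finset.mem_range, Finset.mem_Ico]; omega
  have hdisj : Disjoint (Finset.range i) (Finset.Ico (i+1) (m+1)) := by
    simp [Finset.disjoint_left, Finset.mem_range, Finset.mem_Ico]; omega
  rw [hset, Finset.prod_union hdisj, prodLt, Finset.prod_Ico_eq_prod_range]
  have h1 : m + 1 - (i + 1) = m - i := by omega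
  rw [h1]
  have h2 : ∀ k ∈ Finset.range (m-i), ((i:ℝ) - ((i + 1 + k : ℕ):ℝ)) = -((k:ℝ)+1) := by
    intro k _; push_cast; ring
  rw [Finset.prod_congr rfl h2]
  have h3 : (∏ k ∈ Finset.range (m-i), -((k:ℝ)+1)) =
      (-1:ℝ)^(m-i) * (∏ k ∈ Finset.range (m-i), ((k:ℝ)+1)) := by
    calc (∏ k ∈ Finset.range (m-i), -((k:ℝ)+1))
        = ∏ k ∈ Finset.range (m-i), ((-1:ℝ) * ((k:ℝ)+1)) := by
          apply Finset.prod_congr rfl; intros; ring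
      _ = _ := by rw [Finset.prod_mul_distrib, Finset.prod_const, Finset.card_range]
  rw [h3, ← Nat.cast_inj (R := ℝ) |>.2 (Finset.prod_range_add_one_eq_factorial (m-i))]
  push_cast
  ring


lemma coeffEq (m i : ℕ) (h : i ≤ m) :
    legendreCoeff m i =
      (-1:ℝ)^(m-i) * (i+m).factorial / ((i.factorial)^2 * (m-i).factorial) := by
  have hi : (i.factorial : ℝ) ≠ 0 := Nat.cast_ne_zero.2 i.factorial_ne_zero
  have hmi : ((m-i).factorial : ℝ) ≠ 0 := Nat.cast_ne_zero.2 (m-i).factorial_ne_zero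
  have hs : ((-1:ℝ)^(m-i)) * ((-1:ℝ)^(m-i)) = 1 := by
    rw [← pow_add]
    exact Even.neg_one_pow ⟨m-i, by ring⟩
  unfold legendreCoeff
  rw [prodNum, prodErase m i h]
  have hne : ((-1:ℝ)^(m-i)) ≠ 0 := by
    intro h0; rw [h0, mul_zero] at hs; exact one_ne_zero hs.symm
  field_simp
  linear_combination (-1:ℝ) * hs

lemma sumCoeffDiv (m : ℕ) (hm : 1 ≤ m) :
    ∑ i ∈ Finset.range (m+1), legendreCoeff m i / ((i:ℝ)+1) = 0 := by
  set G : ℕ → ℝ := fun i =>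
    if i ≤ m then
      (-1:ℝ)^(m-i+1) * i * ((m+i).factorial) /
        ((m:ℝ)*((m:ℝ)+1)*((i.factorial:ℝ))^2*(((m-i).factorial:ℝ))) else 0 with hG
  have key : ∀ i ∈ Finset.range (m+1), legendreCoeff m i / ((i:ℝ)+1) = G (i+1) - G i := by
    intro i hi
    simp only [Finset.mem_range] at hi
    have him : i ≤ m := by omega
    rw [coeffEq m i him]
    rcases eq_or_lt_of_le him with rfl | hlt
    · simp only [hG]
      rw [if_neg (by omega), if_pos (le_refl i)]
      simp only [Nat.sub_self, pow_zero, pow_one, zero_sub]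
      have h1 : ((i.factorial:ℝ)) ≠ 0 := Nat.cast_ne_zero.2 i.factorial_ne_zero
      have h2 : ((i:ℝ)+1) ≠ 0 := by positivity
      have h3 : (i:ℝ) ≠ 0 := by
        have : 1 ≤ i := hm
        simp; omega
      have h4 : (((i+i).factorial:ℝ)) ≠ 0 := Nat.cast_ne_zero.2 (i+i).factorial_ne_zero
      field_simp
      ring
    · obtain ⟨k, rfl⟩ : ∃ k, m = i + k + 1 := ⟨m - i - 1, by omega⟩
      simp only [hG]
      rw [if_pos (by omega), if_pos (by omega)]
      rw [show i + k + 1 - (i+1) = k by omega, show i + k + 1 - i = k + 1 by omega]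
      rw [show (i+k+1) + (i+1) = (i + (i+k+1)) + 1 by omega]
      rw [Nat.factorial_succ (i + (i+k+1)), Nat.factorial_succ i, Nat.factorial_succ k]
      have h1 : ((i.factorial:ℝ)) ≠ 0 := Nat.cast_ne_zero.2 i.factorial_ne_zero
      have h2 : ((k.factorial:ℝ)) ≠ 0 := Nat.cast_ne_zero.2 k.factorial_ne_zero
      have h3 : (((i + (i+k+1)).factorial : ℝ)) ≠ 0 :=
        Nat.cast_ne_zero.2 (Nat.factorial_ne_zero _)
      have h4 : ((i:ℝ)+1) ≠ 0 := by positivity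
      have h5 : ((k:ℝ)+1) ≠ 0 := by positivity
      have h6 : ((i:ℝ)+(k:ℝ)+1) ≠ 0 := by positivity
      have h7 : ((i:ℝ)+(k:ℝ)+2) ≠ 0 := by positivity
      push_cast
      rw [pow_succ, pow_succ, pow_succ]
      field_simp
      ring_nf
  rw [Finset.sum_congr rfl key, Finset.sum_range_sub]
  simp only [hG]
  rw [if_neg (by omega), if_pos (by omega : 0 ≤ m)]
  simp

lemma contSL (m : ℕ) : Continuous (shiftedLegendre m) := by
  unfold shiftedLegendre
  exact continuous_finset_sum _ fun i _ => continuous_const.mul (continuous_pow i)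

lemma indIoc_intervalIntegrable {g : ℝ → ℝ} (hg : Continuous g) (a b u v : ℝ) :
    IntervalIntegrable ((Set.Ioc a b).indicator g) volume u v :=
  ⟨((hg.intervalIntegrable u v).1).indicator measurableSet_Ioc,
   ((hg.intervalIntegrable u v).2).indicator measurableSet_Ioc⟩

lemma indIoc_zero_left {g : ℝ → ℝ} {a b u v : ℝ} (huv : u ≤ v) (hva : v ≤ a) :
    ∫ s in u..v, (Set.Ioc a b).indicator g s = 0 := by
  rw [intervalIntegral.integral_of_le huv, setIntegral_indicator measurableSet_Ioc]
  have : Set.Ioc u v ∩ Set.Ioc a b = ∅ := by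
    ext x
    simp only [Set.mem_inter_iff, Set.mem_Ioc, Set.mem_empty_iff_false, iff_false, not_and]
    intro h1 h2
    intro h3
    linarith [h1.2, h2]
  rw [this]
  simp

lemma indIoc_zero_right {g : ℝ → ℝ} {a b u v : ℝ} (huv : u ≤ v) (hbu : b ≤ u) :
    ∫ s in u..v, (Set.Ioc a b).indicator g s = 0 := by
  rw [intervalIntegral.integral_of_le huv, setIntegral_indicator measurableSet_Ioc]
  have : Set.Ioc u v ∩ Set.Ioc a b = ∅ := by
    ext x
    simp only [Set.mem_inter_iff, Set.mem_Ioc, Set.mem_empty_iff_false, iff_false, not_and]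
    intro h1 h2
    intro h3
    linarith [h1.1, h3]
  rw [this]
  simp

lemma indIoc_mid {g : ℝ → ℝ} {a b u v : ℝ} (hau : a ≤ u) (huv : u ≤ v) (hvb : v ≤ b) :
    ∫ s in u..v, (Set.Ioc a b).indicator g s = ∫ s in u..v, g s := by
  rw [intervalIntegral.integral_of_le huv, setIntegral_indicator measurableSet_Ioc,
    intervalIntegral.integral_of_le huv]
  congr 1
  rw [Set.inter_eq_left.2 (Set.Ioc_subset_Ioc hau hvb)]

lemma intSL (m : ℕ) (x : ℝ) :
    ∫ s in (0:ℝ)..x, shiftedLegendre m s =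
      ∑ i ∈ Finset.range (m+1), legendreCoeff m i / ((i:ℝ)+1) * x^(i+1) := by
  unfold shiftedLegendre
  rw [intervalIntegral.integral_finset_sum]
  · apply Finset.sum_congr rfl
    intro i _
    rw [intervalIntegral.integral_const_mul, integral_pow]
    ring
  · intro i _
    exact (continuous_const.mul (continuous_pow i)).intervalIntegrable 0 x

lemma sf_ae (J n m : ℕ) (u v : ℝ) :
    (∫ s in u..v, scalingFun J n m s) =
      ∫ s in u..v, (Set.Ioc (((n:ℝ)-1)/2^(J-1)) ((n:ℝ)/2^(J-1))).indicator
        (fun s => Real.sqrt (2^(J-1)) * Real.sqrt (2*m+1) *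
          shiftedLegendre m (2^(J-1)*s - n + 1)) s := by
  apply intervalIntegral.integral_congr_ae
  have h2 : scalingFun J n m = (Set.Ico (((n:ℝ)-1)/2^(J-1)) ((n:ℝ)/2^(J-1))).indicator
      (fun s => Real.sqrt (2^(J-1)) * Real.sqrt (2*m+1) *
        shiftedLegendre m (2^(J-1)*s - n + 1)) := by
    funext s
    simp only [scalingFun, Set.indicator_apply, Set.mem_Ico]
  rw [h2]
  have h1 : (Set.Ico (((n:ℝ)-1)/2^(J-1)) ((n:ℝ)/2^(J-1))).indicator
      (fun s => Real.sqrt (2^(J-1)) * Real.sqrt (2*m+1) *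
        shiftedLegendre m (2^(J-1)*s - n + 1)) =ᵐ[volume]
      (Set.Ioc (((n:ℝ)-1)/2^(J-1)) ((n:ℝ)/2^(J-1))).indicator
      (fun s => Real.sqrt (2^(J-1)) * Real.sqrt (2*m+1) *
        shiftedLegendre m (2^(J-1)*s - n + 1)) :=
    indicator_ae_eq_of_ae_eq_set Ico_ae_eq_Ioc
  exact h1.mono fun x hx _ => hx

lemma gInt (J n m : ℕ) (x : ℝ) :
    (∫ s in (((n:ℝ)-1)/2^(J-1))..x,
        Real.sqrt (2^(J-1)) * Real.sqrt (2*m+1) * shiftedLegendre m (2^(J-1)*s - n + 1)) =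
      Real.sqrt ((2*m+1)/2^(J-1)) *
        ∑ i ∈ Finset.range (m+1), legendreCoeff m i / ((i:ℝ)+1) * (2^(J-1)*x - n + 1)^(i+1) := by
  have hK : (0:ℝ) < 2^(J-1) := by positivity
  have hKne : ((2:ℝ)^(J-1)) ≠ 0 := ne_of_gt hK
  have hform : ∀ s : ℝ, (2:ℝ)^(J-1)*s - n + 1 = 2^(J-1)*s + (1 - n) := by intro s; ring
  simp_rw [hform]
  rw [intervalIntegral.integral_const_mul]
  rw [intervalIntegral.integral_comp_mul_add (shiftedLegendre m) hKne (1 - n)]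
  have hb0 : (2:ℝ)^(J-1) * (((n:ℝ)-1)/2^(J-1)) + (1 - n) = 0 := by field_simp; ring
  rw [hb0, intSL, smul_eq_mul]
  have hC : Real.sqrt (2^(J-1)) * Real.sqrt (2*(m:ℝ)+1) * ((2:ℝ)^(J-1))⁻¹
      = Real.sqrt ((2*m+1)/2^(J-1)) := by
    rw [Real.sqrt_div (by positivity)]
    have h2 : Real.sqrt ((2:ℝ)^(J-1)) * Real.sqrt ((2:ℝ)^(J-1)) = 2^(J-1) :=
      Real.mul_self_sqrt hK.le
    have h3 : Real.sqrt ((2:ℝ)^(J-1)) ≠ 0 := by positivity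
    field_simp
    linear_combination h2
  rw [← mul_assoc, hC]

/-- **Exact left integral of the shifted Legendre scaling functions (Result 1)**:
for `J ≥ 1`, `n ∈ {1, …, 2^{J−1}}`, `m : ℕ` and `t ∈ [0,1]`, the integral
`∫₀ᵗ φ_{n,m}^J(s) ds` is given piecewise. -/
theorem scalingFun_left_integral (J : ℕ) (hJ : 1 ≤ J) (n : ℕ)
    (hn : 1 ≤ n) (hn2 : n ≤ 2 ^ (J - 1)) (m : ℕ) (t : ℝ) (ht : t ∈ Set.Icc (0:ℝ) 1) :
    (t ≤ ((n : ℝ) - 1) / 2 ^ (J - 1) →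
      (∫ s in (0:ℝ)..t, scalingFun J n m s) = 0) ∧
    (((n : ℝ) - 1) / 2 ^ (J - 1) < t → t < (n : ℝ) / 2 ^ (J - 1) →
      (∫ s in (0:ℝ)..t, scalingFun J n m s) =
        Real.sqrt ((2 * m + 1) / 2 ^ (J - 1)) *
          ∑ i ∈ Finset.range (m + 1),
            legendreCoeff m i / (i + 1) * (2 ^ (J - 1) * t - n + 1) ^ (i + 1)) ∧
    ((n : ℝ) / 2 ^ (J - 1) ≤ t → m = 0 →
      (∫ s in (0:ℝ)..t, scalingFun J n m s) = Real.sqrt (1 / 2 ^ (J - 1))) ∧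
    ((n : ℝ) / 2 ^ (J - 1) ≤ t → 1 ≤ m →
      (∫ s in (0:ℝ)..t, scalingFun J n m s) = 0) := by
  have hK : (0:ℝ) < 2^(J-1) := by positivity
  have hKne : ((2:ℝ)^(J-1)) ≠ 0 := ne_of_gt hK
  have hn1 : (1:ℝ) ≤ (n:ℝ) := by exact_mod_cast hn
  have hnK : (n:ℝ) ≤ 2^(J-1) := by
    have : ((n:ℕ):ℝ) ≤ ((2^(J-1):ℕ):ℝ) := Nat.cast_le.2 hn2
    push_cast at this
    exact this
  set a : ℝ := ((n:ℝ)-1)/2^(J-1) with hadef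
  set b : ℝ := (n:ℝ)/2^(J-1) with hbdef
  set g : ℝ → ℝ := fun s => Real.sqrt (2^(J-1)) * Real.sqrt (2*m+1) *
      shiftedLegendre m (2^(J-1)*s - n + 1) with hgdef
  have hg : Continuous g := by
    apply continuous_const.mul
    exact (contSL m).comp (by continuity)
  have ha0 : 0 ≤ a := div_nonneg (by linarith) hK.le
  have hab : a < b := by
    rw [hadef, hbdef, div_lt_div_iff₀ hK hK]
    nlinarith
  have hb1 : b ≤ 1 := by
    rw [hbdef, div_le_one hK]
    exact hnK
  have key : ∀ u v : ℝ, (∫ s in u..v, scalingFun J n m s)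
      = ∫ s in u..v, (Set.Ioc a b).indicator g s := fun u v => sf_ae J n m u v
  have hval : b ≤ t → (∫ s in (0:ℝ)..t, (Set.Ioc a b).indicator g s)
      = Real.sqrt ((2*m+1)/2^(J-1)) *
        ∑ i ∈ Finset.range (m+1), legendreCoeff m i / ((i:ℝ)+1) := by
    intro h1
    rw [← intervalIntegral.integral_add_adjacent_intervals
      (indIoc_intervalIntegrable hg a b 0 a) (indIoc_intervalIntegrable hg a b a t)]
    rw [indIoc_zero_left ha0 le_rfl, zero_add]
    rw [← intervalIntegral.integral_add_adjacent_intervals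
      (indIoc_intervalIntegrable hg a b a b) (indIoc_intervalIntegrable hg a b b t)]
    rw [indIoc_zero_right h1 le_rfl, add_zero]
    rw [indIoc_mid le_rfl hab.le le_rfl, hgdef]
    rw [gInt J n m b]
    have hone : (2:ℝ)^(J-1) * b - n + 1 = 1 := by
      rw [hbdef]
      field_simp
      ring
    rw [hone]
    simp [one_pow]
  refine ⟨?_, ?_, ?_, ?_⟩
  · intro h1
    rw [key]
    exact indIoc_zero_left ht.1 h1
  · intro h1 h2
    rw [key]
    rw [← intervalIntegral.integral_add_adjacent_intervals
      (indIoc_intervalIntegrable hg a b 0 a) (indIoc_intervalIntegrable hg a b a t)]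
    rw [indIoc_zero_left ha0 le_rfl, zero_add]
    rw [indIoc_mid le_rfl h1.le h2.le, hgdef]
    exact gInt J n m t
  · intro h1 hm0
    subst hm0
    rw [key, hval h1]
    norm_num [Finset.sum_range_one, legendreCoeff]
  · intro h1 hm1
    rw [key, hval h1, sumCoeffDiv m hm1, mul_zero]
end
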